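/- arXiv:0908.2926 — 4 statements merged into one kernel-verified Lean document; each statement's English description precedes it below -/
import Mathlib

section
/- Let (E, ℰ) be a measurable space, P a probability measure on E, and ξ_1, …, ξ_N (N ≥ 1) i.i.d. E-valued random variables each with law P. Let h : E → ℝ be a measurable function with osc(h) < ∞. Then for every real p ≥ 1, (E[ |(1/N) Σ_{k=1}^N h(ξ_k) − ∫_E h dP|^p ])^{1/p} ≤ c(p)^{1/p} · osc(h) / √N. -/
open MeasureTheory ProbabilityTheory Real

/-- The oscillation of a real-valued function: `sup {|h x - h y| : x y}`. -/
noncomputable def osc {E : Type*} (h : E → ℝ) : ℝ :=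
  ⨆ q : E × E, |h q.1 - h q.2|

lemma hoeffding_aux {q : ℝ} (hq0 : 0 ≤ q) (hq1 : q ≤ 1) (t : ℝ) :
    (1 - q) * Real.exp (-q * t) + q * Real.exp ((1 - q) * t) ≤ Real.exp (t ^ 2 / 8) := by
  set g : ℝ → ℝ := fun s => 1 - q + q * Real.exp s with hg_def
  have hg : ∀ s, 0 < g s := by
    intro s
    rcases lt_or_eq_of_le hq1 with hlt | heq
    · have h1 : 0 ≤ q * Real.exp s := mul_nonneg hq0 (Real.exp_pos s).le
      simp only [hg_def]; nlinarith
    · have := Real.exp_pos s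
      simp only [hg_def, heq]; nlinarith
  set F : ℝ → ℝ := fun s => s ^ 2 / 8 + q * s - Real.log (g s) with hF_def
  set F' : ℝ → ℝ := fun s => s / 4 + q - q * Real.exp s / g s with hF'_def
  have hgd : ∀ s, HasDerivAt g (q * Real.exp s) s := by
    intro s
    exact ((Real.hasDerivAt_exp s).const_mul q).const_add (1 - q)
  have hFd : ∀ s, HasDerivAt F (F' s) s := by
    intro s
    have h1 : HasDerivAt (fun s : ℝ => s ^ 2 / 8 + q * s) (s / 4 + q) s := by
      have := ((hasDerivAt_pow 2 s).div_const 8).add ((hasDerivAt_id s).const_mul q)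
      exact this.congr_deriv (by push_cast; ring)
    have h2 : HasDerivAt (fun s => Real.log (g s)) (q * Real.exp s / g s) s :=
      (hgd s).log (hg s).ne'
    exact h1.sub h2
  have hF'd : ∀ s, HasDerivAt F' (1 / 4 - q * (1 - q) * Real.exp s / (g s) ^ 2) s := by
    intro s
    have h1 : HasDerivAt (fun s : ℝ => s / 4 + q) (1 / 4) s := by
      simpa using ((hasDerivAt_id s).div_const 4).add_const q
    have h2 : HasDerivAt (fun s => q * Real.exp s / g s)
        ((q * Real.exp s * g s - q * Real.exp s * (q * Real.exp s)) / (g s) ^ 2) s :=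
      ((Real.hasDerivAt_exp s).const_mul q).div (hgd s) (hg s).ne'
    have hnum : q * Real.exp s * g s - q * Real.exp s * (q * Real.exp s)
        = q * (1 - q) * Real.exp s := by
      simp only [hg_def]; ring
    rw [hnum] at h2
    exact h1.sub h2
  have hmono : Monotone F' := by
    apply monotone_of_deriv_nonneg
    · exact fun s => (hF'd s).differentiableAt
    · intro s
      rw [(hF'd s).deriv]
      have h4 : q * (1 - q) * Real.exp s / (g s) ^ 2 ≤ 1 / 4 := by
        rw [div_le_iff₀ (pow_pos (hg s) 2)]
        have h5 : g s = 1 - q + q * Real.exp s := rfl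
        nlinarith [sq_nonneg (1 - q - q * Real.exp s), Real.exp_pos s]
      linarith
  have hg0 : g 0 = 1 := by simp [hg_def]
  have hF'0 : F' 0 = 0 := by simp [hF'_def, hg0]
  have hF0 : F 0 = 0 := by simp [hF_def, hg0]
  have hFnn : ∀ s, 0 ≤ F s := by
    intro s
    rcases le_or_gt 0 s with hs | hs
    · have hm : MonotoneOn F (Set.Ici 0) := by
        apply monotoneOn_of_deriv_nonneg (convex_Ici 0)
        · exact fun x _ => (hFd x).differentiableAt.continuousAt.continuousWithinAt
        · exact fun x _ => (hFd x).differentiableAt.differentiableWithinAt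
        · intro x hx
          rw [(hFd x).deriv]
          rw [interior_Ici] at hx
          have := hmono (le_of_lt hx)
          rw [hF'0] at this
          exact this
      have := hm Set.self_mem_Ici hs hs
      rwa [hF0] at this
    · have hm : AntitoneOn F (Set.Iic 0) := by
        apply antitoneOn_of_deriv_nonpos (convex_Iic 0)
        · exact fun x _ => (hFd x).differentiableAt.continuousAt.continuousWithinAt
        · exact fun x _ => (hFd x).differentiableAt.differentiableWithinAt
        · intro x hx
          rw [(hFd x).deriv]
          rw [interior_Iic] at hx
          have := hmono (le_of_lt hx)
          rw [hF'0] at this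
          exact this
      have := hm hs.le Set.self_mem_Iic hs.le
      rwa [hF0] at this
  have key : Real.log (g t) ≤ t ^ 2 / 8 + q * t := by
    have := hFnn t
    simp only [hF_def] at this
    linarith
  have h6 : g t ≤ Real.exp (t ^ 2 / 8 + q * t) := by
    rw [← Real.exp_log (hg t)]
    exact Real.exp_le_exp.mpr key
  have h7 : (1 - q) * Real.exp (-q * t) + q * Real.exp ((1 - q) * t)
      = Real.exp (-q * t) * g t := by
    simp only [hg_def]
    rw [show (1 - q) * t = -q * t + t by ring, Real.exp_add]
    ring
  rw [h7]
  calc Real.exp (-q * t) * g t ≤ Real.exp (-q * t) * Real.exp (t ^ 2 / 8 + q * t) :=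
        mul_le_mul_of_nonneg_left h6 (Real.exp_pos _).le
    _ = Real.exp (t ^ 2 / 8) := by rw [← Real.exp_add]; ring_nf

lemma hoeffding_mgf {α : Type*} [MeasurableSpace α] (ν : Measure α) [IsProbabilityMeasure ν]
    {Y : α → ℝ} (hY : Measurable Y) {lo hi : ℝ} (hbd : ∀ x, Y x ∈ Set.Icc lo hi)
    (hmean : ∫ x, Y x ∂ν = 0) (t : ℝ) :
    ∫ x, Real.exp (t * Y x) ∂ν ≤ Real.exp (t ^ 2 * (hi - lo) ^ 2 / 8) := by
  have hYint : Integrable Y ν := by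
    refine (integrable_const (max |lo| |hi|)).mono' hY.aestronglyMeasurable ?_
    refine Filter.Eventually.of_forall fun x => ?_
    rw [Real.norm_eq_abs]
    rcases hbd x with ⟨h1, h2⟩
    rw [abs_le]
    constructor
    · calc -(max |lo| |hi|) ≤ -|lo| := neg_le_neg (le_max_left _ _)
        _ ≤ lo := neg_abs_le lo
        _ ≤ Y x := h1
    · calc Y x ≤ hi := h2
        _ ≤ |hi| := le_abs_self hi
        _ ≤ max |lo| |hi| := le_max_right _ _
  have hlo : lo ≤ 0 := by
    have h1 := integral_mono (integrable_const lo) hYint (fun x => (hbd x).1)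
    simpa [hmean] using h1
  have hhi : 0 ≤ hi := by
    have h1 := integral_mono hYint (integrable_const hi) (fun x => (hbd x).2)
    simpa [hmean] using h1
  rcases eq_or_lt_of_le (hlo.trans hhi) with heq | hlohi
  · have h0 : ∀ x, Y x = 0 := fun x =>
      le_antisymm ((hbd x).2.trans (by linarith)) (by linarith [(hbd x).1])
    calc ∫ x, Real.exp (t * Y x) ∂ν = 1 := by simp [h0]
      _ ≤ Real.exp (t ^ 2 * (hi - lo) ^ 2 / 8) := Real.one_le_exp (by positivity)
  · have hd : 0 < hi - lo := sub_pos.mpr hlohi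
    have hexpint : Integrable (fun x => Real.exp (t * Y x)) ν := by
      refine (integrable_const (Real.exp (|t| * max |lo| |hi|))).mono'
        ((hY.const_mul t).exp).aestronglyMeasurable ?_
      refine Filter.Eventually.of_forall fun x => ?_
      rw [Real.norm_eq_abs, Real.abs_exp]
      apply Real.exp_le_exp.mpr
      calc t * Y x ≤ |t * Y x| := le_abs_self _
        _ = |t| * |Y x| := abs_mul _ _
        _ ≤ |t| * max |lo| |hi| := by
            apply mul_le_mul_of_nonneg_left ?_ (abs_nonneg t)
            rcases hbd x with ⟨h1, h2⟩
            rw [abs_le]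
            exact ⟨by nlinarith [neg_abs_le lo, le_max_left |lo| |hi|],
              by nlinarith [le_abs_self hi, le_max_right |lo| |hi|]⟩
    have hptw : ∀ x, Real.exp (t * Y x) ≤
        ((hi - Y x) * Real.exp (t * lo) + (Y x - lo) * Real.exp (t * hi)) / (hi - lo) := by
      intro x
      rcases hbd x with ⟨h1, h2⟩
      have hA : 0 ≤ (hi - Y x) / (hi - lo) := div_nonneg (by linarith) hd.le
      have hB : 0 ≤ (Y x - lo) / (hi - lo) := div_nonneg (by linarith) hd.le
      have hAB : (hi - Y x) / (hi - lo) + (Y x - lo) / (hi - lo) = 1 := by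
        field_simp; ring
      have hcvx := convexOn_exp.2 (Set.mem_univ (t * lo)) (Set.mem_univ (t * hi)) hA hB hAB
      simp only [smul_eq_mul] at hcvx
      have hsum : (hi - Y x) / (hi - lo) * (t * lo) + (Y x - lo) / (hi - lo) * (t * hi)
          = t * Y x := by field_simp; ring
      rw [hsum] at hcvx
      calc Real.exp (t * Y x)
          ≤ (hi - Y x) / (hi - lo) * Real.exp (t * lo)
            + (Y x - lo) / (hi - lo) * Real.exp (t * hi) := hcvx
        _ = ((hi - Y x) * Real.exp (t * lo) + (Y x - lo) * Real.exp (t * hi)) / (hi - lo) := by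
            field_simp
    have hrint : Integrable
        (fun x => ((hi - Y x) * Real.exp (t * lo) + (Y x - lo) * Real.exp (t * hi)) / (hi - lo))
        ν := by
      apply Integrable.div_const
      exact (((integrable_const hi).sub hYint).mul_const _).add
        ((hYint.sub (integrable_const lo)).mul_const _)
    have hval : ∫ x, ((hi - Y x) * Real.exp (t * lo) + (Y x - lo) * Real.exp (t * hi)) / (hi - lo) ∂ν
        = (hi * Real.exp (t * lo) - lo * Real.exp (t * hi)) / (hi - lo) := by
      have h1 : ∀ x, ((hi - Y x) * Real.exp (t * lo) + (Y x - lo) * Real.exp (t * hi)) / (hi - lo)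
          = (Real.exp (t * hi) / (hi - lo) - Real.exp (t * lo) / (hi - lo)) * Y x
            + (hi * Real.exp (t * lo) - lo * Real.exp (t * hi)) / (hi - lo) := by
        intro x; field_simp; ring
      simp_rw [h1]
      rw [integral_add (hYint.const_mul _) (integrable_const _), integral_const_mul, hmean,
        integral_const]
      simp
    have hstep := (integral_mono hexpint hrint hptw).trans_eq hval
    -- now the analytic bound
    set q : ℝ := -lo / (hi - lo) with hq_def
    have hq0 : 0 ≤ q := div_nonneg (by linarith) hd.le
    have hq1 : q ≤ 1 := by
      rw [hq_def, div_le_one hd]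
      linarith
    have haux := hoeffding_aux hq0 hq1 (t * (hi - lo))
    have e1 : -q * (t * (hi - lo)) = t * lo := by
      rw [hq_def]; field_simp
    have e2 : (1 - q) * (t * (hi - lo)) = t * hi := by
      rw [hq_def]; field_simp; ring
    have e3 : (t * (hi - lo)) ^ 2 / 8 = t ^ 2 * (hi - lo) ^ 2 / 8 := by ring
    rw [e1, e2, e3] at haux
    have e4 : (hi * Real.exp (t * lo) - lo * Real.exp (t * hi)) / (hi - lo)
        = (1 - q) * Real.exp (t * lo) + q * Real.exp (t * hi) := by
      rw [hq_def]; field_simp; ring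
    rw [e4] at hstep
    exact hstep.trans haux

noncomputable def cConst (p : ℝ) : ℝ :=
  if p = 1 then 1 else 2 ^ (-p / 2) * p * Real.Gamma (p / 2)

set_option maxHeartbeats 2000000 in
/-- Lemma 1: weak-sense `L_p` error of the sampling operator. -/
theorem lp_sampling_error
    {E : Type*} [MeasurableSpace E] {Ω : Type*} [MeasurableSpace Ω]
    (μ : Measure Ω) [IsProbabilityMeasure μ]
    (P : Measure E) [IsProbabilityMeasure P]
    (N : ℕ) (hN : 1 ≤ N)
    (ξ : Fin N → Ω → E)
    (hmeas : ∀ k, Measurable (ξ k))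
    (hindep : iIndepFun ξ μ)
    (hlaw : ∀ k, Measure.map (ξ k) μ = P)
    (h : E → ℝ) (hmh : Measurable h)
    (hosc : BddAbove (Set.range fun q : E × E => |h q.1 - h q.2|))
    (p : ℝ) (hp : 1 ≤ p) :
    (∫ ω, |(1 / (N : ℝ)) * ∑ k, h (ξ k ω) - ∫ x, h x ∂P| ^ p ∂μ) ^ (1 / p) ≤
      (cConst p) ^ (1 / p) * osc h / Real.sqrt N := by
  classical
  have hp0 : 0 < p := lt_of_lt_of_le one_pos hp
  have hΩ : Nonempty Ω := by
    by_contra hc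
    rw [not_nonempty_iff] at hc
    have h1 : μ Set.univ = 1 := measure_univ
    rw [Set.univ_eq_empty_iff.mpr hc] at h1
    simp at h1
  obtain ⟨ω₀⟩ := hΩ
  have hNpos : (0 : ℝ) < N := by exact_mod_cast hN
  set e₀ : E := ξ ⟨0, hN⟩ ω₀ with he₀
  set a : ℝ := osc h with ha_def
  have hosc_le : ∀ x y : E, |h x - h y| ≤ a := by
    intro x y
    have := le_ciSup hosc ((x, y) : E × E)
    simpa [ha_def, osc] using this
  have ha0 : 0 ≤ a := le_trans (abs_nonneg _) (hosc_le e₀ e₀)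
  set m : ℝ := ∫ x, h x ∂P with hm_def
  set Z : Ω → ℝ := fun ω => 1 / (N : ℝ) * ∑ k, h (ξ k ω) - m with hZ_def
  have hZmeas : Measurable Z :=
    ((Finset.measurable_sum _ fun k _ => hmh.comp (hmeas k)).const_mul _).sub measurable_const
  have hhint : Integrable h P := by
    refine (integrable_const (|h e₀| + a)).mono' hmh.aestronglyMeasurable ?_
    refine Filter.Eventually.of_forall fun x => ?_
    rw [Real.norm_eq_abs]
    have h1 := hosc_le x e₀
    have h2 := abs_sub_abs_le_abs_sub (h x) (h e₀)
    linarith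
  have habsm : ∀ x, |h x - m| ≤ a := by
    intro x
    have h3 : h x - m = ∫ y, (h x - h y) ∂P := by
      rw [integral_sub (integrable_const _) hhint, integral_const]
      simp [hm_def]
    rw [h3]
    calc |∫ y, (h x - h y) ∂P| ≤ ∫ y, |h x - h y| ∂P :=
          by
            simpa [Real.norm_eq_abs] using
              norm_integral_le_integral_norm (μ := P) (fun y => h x - h y)
      _ ≤ ∫ _, a ∂P :=
          integral_mono ((integrable_const (h x)).sub hhint).abs (integrable_const a)
            fun y => hosc_le x y
      _ = a := by simp
  have hZbd : ∀ ω, |Z ω| ≤ a := by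
    intro ω
    have hZeq : Z ω = 1 / (N : ℝ) * ∑ k, (h (ξ k ω) - m) := by
      rw [hZ_def]
      simp only [Finset.sum_sub_distrib, Finset.sum_const, Finset.card_univ, Fintype.card_fin,
        nsmul_eq_mul]
      field_simp
    rw [hZeq, abs_mul, abs_of_nonneg (by positivity : (0:ℝ) ≤ 1 / (N:ℝ))]
    calc 1 / (N:ℝ) * |∑ k, (h (ξ k ω) - m)| ≤ 1 / (N:ℝ) * ∑ k, |h (ξ k ω) - m| := by
          gcongr
          exact Finset.abs_sum_le_sum_abs _ _
      _ ≤ 1 / (N:ℝ) * ∑ _k : Fin N, a := by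
          gcongr with k
          exact habsm _
      _ = a := by
          simp only [Finset.sum_const, Finset.card_univ, Fintype.card_fin, nsmul_eq_mul]
          field_simp
  suffices hmain : ∫ ω, |Z ω| ^ p ∂μ ≤ cConst p * (a / Real.sqrt N) ^ p by
    have hcnn : 0 ≤ cConst p := by
      rw [cConst]
      split_ifs
      · norm_num
      · have := Real.Gamma_pos_of_pos (by positivity : 0 < p / 2)
        positivity
    have hsnn : 0 ≤ a / Real.sqrt N := div_nonneg ha0 (Real.sqrt_nonneg _)
    have hintnn : 0 ≤ ∫ ω, |Z ω| ^ p ∂μ :=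
      integral_nonneg fun ω => Real.rpow_nonneg (abs_nonneg _) p
    have hstep := Real.rpow_le_rpow hintnn hmain (by positivity : (0:ℝ) ≤ 1 / p)
    have hrhs : (cConst p * (a / Real.sqrt N) ^ p) ^ (1 / p)
        = cConst p ^ (1 / p) * osc h / Real.sqrt N := by
      rw [Real.mul_rpow hcnn (Real.rpow_nonneg hsnn p), ← Real.rpow_mul hsnn,
        mul_one_div_cancel hp0.ne', Real.rpow_one, mul_div_assoc]
    rw [hrhs] at hstep
    exact hstep
  rcases eq_or_lt_of_le ha0 with ha | ha
  · -- osc h = 0 : h is a.e. constant equal to m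
    have hhm : ∀ x, h x = m := by
      intro x
      have := habsm x
      rw [← ha] at this
      have := abs_nonneg (h x - m)
      have h2 : |h x - m| = 0 := le_antisymm (by linarith) (abs_nonneg _)
      rw [abs_eq_zero] at h2
      linarith
    have hZ0 : ∀ ω, Z ω = 0 := by
      intro ω
      rw [hZ_def]
      simp only [hhm, Finset.sum_const, Finset.card_univ, Fintype.card_fin, nsmul_eq_mul]
      field_simp; ring
    have hL : ∫ ω, |Z ω| ^ p ∂μ = 0 := by
      simp [hZ0, Real.zero_rpow hp0.ne']
    rw [hL]
    have : (0:ℝ) ≤ cConst p * (a / Real.sqrt N) ^ p := by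
      have hcnn : 0 ≤ cConst p := by
        rw [cConst]; split_ifs
        · norm_num
        · have := Real.Gamma_pos_of_pos (by positivity : 0 < p / 2)
          positivity
      have : 0 ≤ (a / Real.sqrt N) ^ p :=
        Real.rpow_nonneg (div_nonneg ha0 (Real.sqrt_nonneg _)) p
      positivity
    linarith
  · -- osc h > 0
    have chern : ∀ f : E → ℝ, Measurable f → (∀ x y, |f x - f y| ≤ a) → (∫ x, f x ∂P) = 0 →
        ∀ t : ℝ, 0 < t →
        (μ {ω | (N:ℝ) * t ≤ ∑ k, f (ξ k ω)}).toReal ≤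
          Real.exp (-(2 * N / a ^ 2) * t ^ 2) := by
      intro f hmf hfosc hfmean t ht
      have hfint : Integrable f P := by
        refine (integrable_const (|f e₀| + a)).mono' hmf.aestronglyMeasurable ?_
        refine Filter.Eventually.of_forall fun x => ?_
        rw [Real.norm_eq_abs]
        have h1 := hfosc x e₀
        have h2 := abs_sub_abs_le_abs_sub (f x) (f e₀)
        linarith
      have hfbd : ∀ x, |f x| ≤ a := by
        intro x
        have h3 : f x = ∫ y, (f x - f y) ∂P := by
          rw [integral_sub (integrable_const _) hfint, integral_const, hfmean]
          simp
        rw [h3]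
        calc |∫ y, (f x - f y) ∂P| ≤ ∫ y, |f x - f y| ∂P := by
              simpa [Real.norm_eq_abs] using
                norm_integral_le_integral_norm (μ := P) (fun y => f x - f y)
          _ ≤ ∫ _, a ∂P :=
              integral_mono ((integrable_const (f x)).sub hfint).abs (integrable_const a)
                fun y => hfosc x y
          _ = a := by simp
      set lo : ℝ := sInf (Set.range f) with hlo_def
      set hi : ℝ := sSup (Set.range f) with hhi_def
      have hbA : BddAbove (Set.range f) := by
        refine ⟨a, ?_⟩
        rintro _ ⟨x, rfl⟩
        linarith [(abs_le.mp (hfbd x)).2]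
      have hbB : BddBelow (Set.range f) := by
        refine ⟨-a, ?_⟩
        rintro _ ⟨x, rfl⟩
        linarith [(abs_le.mp (hfbd x)).1]
      have hne : (Set.range f).Nonempty := ⟨f e₀, ⟨e₀, rfl⟩⟩
      have hmem : ∀ x, f x ∈ Set.Icc lo hi :=
        fun x => ⟨csInf_le hbB ⟨x, rfl⟩, le_csSup hbA ⟨x, rfl⟩⟩
      have hlohi : lo ≤ hi := (hmem e₀).1.trans (hmem e₀).2
      have hhl : hi - lo ≤ a := by
        have h1 : ∀ y, hi - a ≤ f y := by
          intro y
          have h2 : ∀ x, f x ≤ a + f y := by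
            intro x
            have := (abs_le.mp (hfosc x y)).2
            linarith
          have h4 : hi ≤ a + f y := by
            apply csSup_le hne
            rintro _ ⟨x, rfl⟩
            exact h2 x
          linarith
        have h5 : hi - a ≤ lo := by
          apply le_csInf hne
          rintro _ ⟨y, rfl⟩
          exact h1 y
        linarith
      set X : Fin N → Ω → ℝ := fun k ω => f (ξ k ω) with hX_def
      have hXmeas : ∀ k, Measurable (X k) := fun k => hmf.comp (hmeas k)
      have hXindep : iIndepFun X μ :=
        hindep.comp (fun _ => f) (fun _ => hmf)
      set lam : ℝ := 4 * t / a ^ 2 with hlam_def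
      have hlam : 0 ≤ lam := by positivity
      have hSmeas : Measurable (fun ω => ∑ k, X k ω) :=
        Finset.measurable_sum _ fun k _ => hXmeas k
      have hSbd : ∀ ω, ∑ k, X k ω ≤ N * a := by
        intro ω
        calc ∑ k, X k ω ≤ ∑ _k : Fin N, a :=
              Finset.sum_le_sum fun k _ => (abs_le.mp (hfbd _)).2
          _ = N * a := by
              simp [Finset.sum_const, Finset.card_univ]
      have hSint : Integrable (fun ω => Real.exp (lam * ∑ k, X k ω)) μ := by
        refine (integrable_const (Real.exp (lam * ((N:ℝ) * a)))).mono'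
          ((hSmeas.const_mul lam).exp).aestronglyMeasurable ?_
        refine Filter.Eventually.of_forall fun ω => ?_
        rw [Real.norm_eq_abs, Real.abs_exp]
        exact Real.exp_le_exp.mpr (mul_le_mul_of_nonneg_left (hSbd ω) hlam)
      have hsum_apply : ∀ ω, (∑ k, X k) ω = ∑ k, X k ω := by
        intro ω; simp [Finset.sum_apply]
      have hSint' : Integrable (fun ω => Real.exp (lam * (∑ k, X k) ω)) μ := by
        simpa only [hsum_apply] using hSint
      have hchern := measure_ge_le_exp_mul_mgf (μ := μ) (X := ∑ k, X k) ((N:ℝ) * t) hlam hSint'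
      have hmgf_le : mgf (∑ k, X k) μ lam ≤ Real.exp ((N:ℝ) * (lam ^ 2 * a ^ 2 / 8)) := by
        rw [hXindep.mgf_sum hXmeas]
        calc ∏ k : Fin N, mgf (X k) μ lam
            ≤ ∏ _k : Fin N, Real.exp (lam ^ 2 * a ^ 2 / 8) := by
              apply Finset.prod_le_prod (fun k _ => mgf_nonneg) (fun k _ => ?_)
              have h1 : mgf (X k) μ lam = ∫ x, Real.exp (lam * f x) ∂P := by
                rw [mgf, ← hlaw k,
                  integral_map (hmeas k).aemeasurable
                    ((hmf.const_mul lam).exp).aestronglyMeasurable]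
              rw [h1]
              refine (hoeffding_mgf P hmf hmem hfmean lam).trans ?_
              apply Real.exp_le_exp.mpr
              have h2 : (hi - lo) ^ 2 ≤ a ^ 2 := by nlinarith
              nlinarith [sq_nonneg lam]
          _ = Real.exp ((N:ℝ) * (lam ^ 2 * a ^ 2 / 8)) := by
              rw [Finset.prod_const, Finset.card_univ, Fintype.card_fin,
                ← Real.exp_nat_mul]
      have hsetE : {ω | (N:ℝ) * t ≤ ∑ k, f (ξ k ω)} = {ω | (N:ℝ) * t ≤ (∑ k, X k) ω} := by
        ext ω
        simp [hsum_apply, hX_def]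
      rw [hsetE]
      calc (μ {ω | (N:ℝ) * t ≤ (∑ k, X k) ω}).toReal
          ≤ Real.exp (-lam * ((N:ℝ) * t)) * mgf (∑ k, X k) μ lam := hchern
        _ ≤ Real.exp (-lam * ((N:ℝ) * t)) * Real.exp ((N:ℝ) * (lam ^ 2 * a ^ 2 / 8)) :=
            mul_le_mul_of_nonneg_left hmgf_le (Real.exp_pos _).le
        _ = Real.exp (-(2 * N / a ^ 2) * t ^ 2) := by
            rw [← Real.exp_add]
            congr 1
            rw [hlam_def]
            field_simp
            ring
    have hf1 := chern (fun x => h x - m) (hmh.sub measurable_const)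
      (fun x y => by simpa using hosc_le x y)
      (by rw [integral_sub hhint (integrable_const m), integral_const]; simp [hm_def])
    have hf2 := chern (fun x => m - h x) (measurable_const.sub hmh)
      (fun x y => by
        have := hosc_le y x
        rw [show m - h x - (m - h y) = h y - h x by ring]
        exact this)
      (by rw [integral_sub (integrable_const m) hhint, integral_const]; simp [hm_def])
    have htail : ∀ t : ℝ, 0 < t →
        (μ {ω | t ≤ |Z ω|}).toReal ≤ 2 * Real.exp (-(2 * N / a ^ 2) * t ^ 2) := by
      intro t ht
      have hsub : {ω | t ≤ |Z ω|} ⊆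
          {ω | (N:ℝ) * t ≤ ∑ k, (h (ξ k ω) - m)} ∪ {ω | (N:ℝ) * t ≤ ∑ k, (m - h (ξ k ω))} := by
        intro ω hω
        have hsum1 : ∑ k, (h (ξ k ω) - m) = (∑ k, h (ξ k ω)) - N * m := by
          simp [Finset.sum_sub_distrib, Finset.sum_const, Finset.card_univ, nsmul_eq_mul]
        have hsum2 : ∑ k, (m - h (ξ k ω)) = N * m - (∑ k, h (ξ k ω)) := by
          simp [Finset.sum_sub_distrib, Finset.sum_const, Finset.card_univ, nsmul_eq_mul]
        have hω' : t ≤ |Z ω| := hω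
        rcases le_abs.mp hω' with hc | hc
        · left
          show (N:ℝ) * t ≤ _
          rw [hsum1]
          have h2 : (N:ℝ) * t ≤ N * (1 / N * ∑ k, h (ξ k ω) - m) :=
            mul_le_mul_of_nonneg_left hc hNpos.le
          calc (N:ℝ) * t ≤ N * (1 / N * ∑ k, h (ξ k ω) - m) := h2
            _ = (∑ k, h (ξ k ω)) - N * m := by field_simp
        · right
          show (N:ℝ) * t ≤ _
          rw [hsum2]
          have h2 : (N:ℝ) * t ≤ N * (-(1 / N * ∑ k, h (ξ k ω) - m)) :=
            mul_le_mul_of_nonneg_left hc hNpos.le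
          calc (N:ℝ) * t ≤ N * (-(1 / N * ∑ k, h (ξ k ω) - m)) := h2
            _ = (N:ℝ) * m - (∑ k, h (ξ k ω)) := by field_simp; ring
      have hmeasle : μ {ω | t ≤ |Z ω|} ≤
          μ {ω | (N:ℝ) * t ≤ ∑ k, (h (ξ k ω) - m)} + μ {ω | (N:ℝ) * t ≤ ∑ k, (m - h (ξ k ω))} :=
        (measure_mono hsub).trans (measure_union_le _ _)
      have hne1 : μ {ω | (N:ℝ) * t ≤ ∑ k, (h (ξ k ω) - m)} ≠ ⊤ := measure_ne_top _ _
      have hne2 : μ {ω | (N:ℝ) * t ≤ ∑ k, (m - h (ξ k ω))} ≠ ⊤ := measure_ne_top _ _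
      calc (μ {ω | t ≤ |Z ω|}).toReal
          ≤ (μ {ω | (N:ℝ) * t ≤ ∑ k, (h (ξ k ω) - m)}
              + μ {ω | (N:ℝ) * t ≤ ∑ k, (m - h (ξ k ω))}).toReal :=
            ENNReal.toReal_mono (by rw [ENNReal.add_ne_top]; exact ⟨hne1, hne2⟩) hmeasle
        _ = (μ {ω | (N:ℝ) * t ≤ ∑ k, (h (ξ k ω) - m)}).toReal
              + (μ {ω | (N:ℝ) * t ≤ ∑ k, (m - h (ξ k ω))}).toReal :=
            ENNReal.toReal_add hne1 hne2
        _ ≤ Real.exp (-(2 * N / a ^ 2) * t ^ 2) + Real.exp (-(2 * N / a ^ 2) * t ^ 2) :=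
            add_le_add (hf1 t ht) (hf2 t ht)
        _ = 2 * Real.exp (-(2 * N / a ^ 2) * t ^ 2) := by ring
    -- common setup for both exponent cases
    set X : Fin N → Ω → ℝ := fun k ω => h (ξ k ω) - m with hX_def
    have hXmeas : ∀ k, Measurable (X k) := fun k => (hmh.comp (hmeas k)).sub measurable_const
    have hXbd : ∀ k ω, |X k ω| ≤ a := fun k ω => habsm _
    have hXint : ∀ k, Integrable (X k) μ := by
      intro k
      refine (integrable_const a).mono' (hXmeas k).aestronglyMeasurable ?_
      exact Filter.Eventually.of_forall fun ω => by
        rw [Real.norm_eq_abs]; exact hXbd k ω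
    have hZX : ∀ ω, Z ω = 1 / (N:ℝ) * ∑ k, X k ω := by
      intro ω
      rw [hZ_def, hX_def]
      simp only [Finset.sum_sub_distrib, Finset.sum_const, Finset.card_univ, Fintype.card_fin,
        nsmul_eq_mul]
      field_simp
    rcases eq_or_lt_of_le hp with hp1 | hp1
    · -- p = 1 : use the variance bound
      have hEX : ∀ k, ∫ ω, X k ω ∂μ = 0 := by
        intro k
        have h1 : ∫ ω, X k ω ∂μ = ∫ x, (h x - m) ∂P := by
          rw [← hlaw k, integral_map (hmeas k).aemeasurable (f := fun x => h x - m)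
            ((hmh.sub measurable_const)).aestronglyMeasurable]
        rw [h1, integral_sub hhint (integrable_const m), integral_const]
        simp [hm_def]
      have hprodint : ∀ j k, Integrable (fun ω => X j ω * X k ω) μ := by
        intro j k
        refine (integrable_const (a * a)).mono'
          ((hXmeas j).mul (hXmeas k)).aestronglyMeasurable ?_
        refine Filter.Eventually.of_forall fun ω => ?_
        rw [Real.norm_eq_abs, abs_mul]
        exact mul_le_mul (hXbd j ω) (hXbd k ω) (abs_nonneg _) ha0
      have hXindep : iIndepFun X μ :=
        hindep.comp (fun _ => fun x => h x - m) (fun _ => hmh.sub measurable_const)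
      have hcross : ∀ j k, j ≠ k → ∫ ω, X j ω * X k ω ∂μ = 0 := by
        intro j k hjk
        have hind2 : IndepFun (X j) (X k) μ := hXindep.indepFun hjk
        have := hind2.integral_mul_eq_mul_integral (hXint j).aestronglyMeasurable (hXint k).aestronglyMeasurable
        have h2 : ∫ ω, X j ω * X k ω ∂μ = (∫ ω, X j ω ∂μ) * ∫ ω, X k ω ∂μ := by
          simpa [Pi.mul_apply] using this
        rw [h2, hEX j, hEX k, mul_zero]
      have hdiag : ∀ k : Fin N, ∫ ω, X k ω * X k ω ∂μ ≤ a ^ 2 := by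
        intro k
        calc ∫ ω, X k ω * X k ω ∂μ ≤ ∫ _, a ^ 2 ∂μ := by
              refine integral_mono (hprodint k k) (integrable_const _) fun ω => ?_
              have := hXbd k ω
              nlinarith [abs_nonneg (X k ω), neg_abs_le (X k ω), le_abs_self (X k ω)]
          _ = a ^ 2 := by simp
      have hsq : ∫ ω, Z ω ^ 2 ∂μ ≤ a ^ 2 / N := by
        have h1 : ∀ ω, Z ω ^ 2 = (1 / (N:ℝ)) ^ 2 * ∑ j, ∑ k, X j ω * X k ω := by
          intro ω
          rw [hZX ω, mul_pow, pow_two (∑ k, X k ω), Finset.sum_mul_sum]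
        have h2 : ∫ ω, Z ω ^ 2 ∂μ
            = (1 / (N:ℝ)) ^ 2 * ∑ j, ∑ k, ∫ ω, X j ω * X k ω ∂μ := by
          simp_rw [h1]
          rw [integral_const_mul, integral_finset_sum _ fun j _ =>
            integrable_finset_sum _ fun k _ => hprodint j k]
          congr 1
          exact Finset.sum_congr rfl fun j _ =>
            integral_finset_sum _ fun k _ => hprodint j k
        rw [h2]
        have h3 : ∀ j : Fin N, ∑ k, ∫ ω, X j ω * X k ω ∂μ = ∫ ω, X j ω * X j ω ∂μ := by
          intro j
          exact Finset.sum_eq_single j (fun k _ hkj => hcross j k (Ne.symm hkj))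
            (fun hj => absurd (Finset.mem_univ j) hj)
        calc (1 / (N:ℝ)) ^ 2 * ∑ j, ∑ k, ∫ ω, X j ω * X k ω ∂μ
            = (1 / (N:ℝ)) ^ 2 * ∑ j, ∫ ω, X j ω * X j ω ∂μ := by
              congr 1
              exact Finset.sum_congr rfl fun j _ => h3 j
          _ ≤ (1 / (N:ℝ)) ^ 2 * ∑ _j : Fin N, a ^ 2 := by
              refine mul_le_mul_of_nonneg_left ?_ (by positivity)
              exact Finset.sum_le_sum fun j _ => hdiag j
          _ = a ^ 2 / N := by
              simp only [Finset.sum_const, Finset.card_univ, Fintype.card_fin, nsmul_eq_mul]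
              field_simp
      -- Cauchy-Schwarz
      have habs2 : ∀ ω, |Z ω| ^ (2:ℝ) = Z ω ^ 2 := by
        intro ω
        rw [show (2:ℝ) = ((2:ℕ):ℝ) by norm_num, Real.rpow_natCast, sq_abs]
      have hol := integral_mul_le_Lp_mul_Lq_of_nonneg (μ := μ)
        Real.HolderConjugate.two_two
        (Filter.Eventually.of_forall fun ω => abs_nonneg (Z ω))
        (Filter.Eventually.of_forall fun _ => zero_le_one)
        (MemLp.of_bound hZmeas.abs.aestronglyMeasurable a
          (Filter.Eventually.of_forall fun ω => by
            rw [Real.norm_eq_abs, abs_abs]; exact hZbd ω))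
        (memLp_const 1)
      simp only [mul_one, Real.one_rpow, integral_const, measure_univ, ENNReal.toReal_one,
        smul_eq_mul, one_mul] at hol
      have hol2 : ∫ ω, |Z ω| ∂μ ≤ (∫ ω, Z ω ^ 2 ∂μ) ^ ((1:ℝ)/2) := by
        calc ∫ ω, |Z ω| ∂μ ≤ (∫ ω, |Z ω| ^ (2:ℝ) ∂μ) ^ ((1:ℝ)/2) := by
              simpa using hol
          _ = (∫ ω, Z ω ^ 2 ∂μ) ^ ((1:ℝ)/2) := by
              congr 1
              exact integral_congr_ae (Filter.Eventually.of_forall fun ω => habs2 ω)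
      rw [← hp1]
      simp only [Real.rpow_one, cConst, eq_self_iff_true, if_true, one_mul]
      calc ∫ ω, |Z ω| ∂μ ≤ (∫ ω, Z ω ^ 2 ∂μ) ^ ((1:ℝ)/2) := hol2
        _ ≤ (a ^ 2 / N) ^ ((1:ℝ)/2) := by
            apply Real.rpow_le_rpow (integral_nonneg fun ω => sq_nonneg _) hsq
            norm_num
        _ = a / Real.sqrt N := by
            rw [← Real.sqrt_eq_rpow, Real.sqrt_div (sq_nonneg a), Real.sqrt_sq ha0]
    · -- p > 1 : Chernoff + layer cake
      set b : ℝ := 2 * N / a ^ 2 with hb_def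
      have hb : 0 < b := by positivity
      have hZabsmeas : Measurable fun ω => |Z ω| := hZmeas.abs
      have hcnn : 0 ≤ cConst p := by
        rw [cConst]; split_ifs
        · norm_num
        · have := Real.Gamma_pos_of_pos (by positivity : 0 < p / 2)
          positivity
      have hptw : ∀ x : ℝ, 0 ≤ x → ∫ s in (0:ℝ)..x, p * s ^ (p - 1) = x ^ p := by
        intro x hx
        rw [intervalIntegral.integral_const_mul,
          integral_rpow (Or.inl (by linarith : (-1:ℝ) < p - 1)), sub_add_cancel,
          Real.zero_rpow hp0.ne']
        field_simp; simp
      have g_intble : ∀ t > (0:ℝ), IntervalIntegrable (fun s => p * s ^ (p - 1)) volume 0 t := by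
        intro t ht
        exact (intervalIntegral.intervalIntegrable_rpow' (by linarith)).const_mul p
      have g_nn : ∀ᵐ t ∂(volume.restrict (Set.Ioi (0:ℝ))), 0 ≤ p * t ^ (p - 1) := by
        filter_upwards [ae_restrict_mem measurableSet_Ioi] with t ht
        have ht' : (0:ℝ) < t := ht
        positivity
      have hlayer := lintegral_comp_eq_lintegral_meas_le_mul μ (f := fun ω => |Z ω|)
        (g := fun s => p * s ^ (p - 1)) (Filter.Eventually.of_forall fun ω => abs_nonneg _)
        hZabsmeas.aemeasurable g_intble g_nn
      have hlhs : ∫⁻ ω, ENNReal.ofReal (|Z ω| ^ p) ∂μ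
          = ∫⁻ t in Set.Ioi 0, μ {ω | t ≤ |Z ω|} * ENNReal.ofReal (p * t ^ (p - 1)) := by
        rw [← hlayer]
        apply lintegral_congr
        intro ω
        rw [hptw _ (abs_nonneg _)]
      have hmaj_int : IntegrableOn (fun t => (2 * p) * (t ^ (p - 1) * Real.exp (-b * t ^ 2)))
          (Set.Ioi (0:ℝ)) :=
        (integrableOn_rpow_mul_exp_neg_mul_sq hb (by linarith : (-1:ℝ) < p - 1)).const_mul _
      have hbound : ∫⁻ t in Set.Ioi 0, μ {ω | t ≤ |Z ω|} * ENNReal.ofReal (p * t ^ (p - 1))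
          ≤ ∫⁻ t in Set.Ioi 0,
              ENNReal.ofReal ((2 * p) * (t ^ (p - 1) * Real.exp (-b * t ^ 2))) := by
        apply lintegral_mono_ae
        filter_upwards [ae_restrict_mem measurableSet_Ioi] with t ht
        have ht' : (0:ℝ) < t := ht
        have h1 : μ {ω | t ≤ |Z ω|} ≤ ENNReal.ofReal (2 * Real.exp (-b * t ^ 2)) := by
          rw [ENNReal.le_ofReal_iff_toReal_le (measure_ne_top _ _) (by positivity)]
          exact htail t ht'
        calc μ {ω | t ≤ |Z ω|} * ENNReal.ofReal (p * t ^ (p - 1))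
            ≤ ENNReal.ofReal (2 * Real.exp (-b * t ^ 2)) * ENNReal.ofReal (p * t ^ (p - 1)) :=
              mul_le_mul_left h1 _
          _ = ENNReal.ofReal ((2 * p) * (t ^ (p - 1) * Real.exp (-b * t ^ 2))) := by
              rw [← ENNReal.ofReal_mul (by positivity)]
              congr 1
              ring
      have hs : 0 < a / Real.sqrt N := div_pos ha (Real.sqrt_pos.mpr hNpos)
      have hval : ∫ t in Set.Ioi (0:ℝ), (2 * p) * (t ^ (p - 1) * Real.exp (-b * t ^ 2))
          = cConst p * (a / Real.sqrt N) ^ p := by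
        rw [integral_const_mul]
        have h3 : ∫ t in Set.Ioi (0:ℝ), t ^ (p - 1) * Real.exp (-b * t ^ 2)
            = ∫ t in Set.Ioi (0:ℝ), t ^ (p - 1) * Real.exp (-b * t ^ (2:ℝ)) := by
          apply setIntegral_congr_fun measurableSet_Ioi
          intro t ht
          simp only [← Real.rpow_natCast t 2]
          norm_num
        have h4 : p - 1 + 1 = p := by ring
        rw [h3, integral_rpow_mul_exp_neg_mul_rpow (by norm_num : (0:ℝ) < 2)
          (by linarith : (-1:ℝ) < p - 1) hb, h4]
        have hs2 : (a / Real.sqrt N) ^ (2:ℕ) = a ^ 2 / N := by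
          rw [div_pow, Real.sq_sqrt hNpos.le]
        have hbs : b = 2 / (a / Real.sqrt N) ^ (2:ℕ) := by
          rw [hs2, hb_def]
          field_simp
        have key : b ^ (-p / 2) = 2 ^ (-p / 2) * (a / Real.sqrt N) ^ p := by
          rw [hbs, Real.div_rpow (by norm_num : (0:ℝ) ≤ 2) (sq_nonneg _),
            ← Real.rpow_natCast (a / Real.sqrt N) 2, ← Real.rpow_mul hs.le,
            show ((2:ℕ):ℝ) * (-p / 2) = -p by push_cast; ring,
            Real.rpow_neg hs.le, div_inv_eq_mul]
        rw [key, cConst, if_neg (by linarith : p ≠ 1)]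
        ring
      have hintZp : AEStronglyMeasurable (fun ω => |Z ω| ^ p) μ :=
        ((Real.continuous_rpow_const hp0.le).measurable.comp hZabsmeas).aestronglyMeasurable
      have hfinal : ∫ ω, |Z ω| ^ p ∂μ
          = (∫⁻ ω, ENNReal.ofReal (|Z ω| ^ p) ∂μ).toReal := by
        rw [integral_eq_lintegral_of_nonneg_ae
          (Filter.Eventually.of_forall fun ω => Real.rpow_nonneg (abs_nonneg _) p) hintZp]
      rw [hfinal]
      have hchain : ∫⁻ ω, ENNReal.ofReal (|Z ω| ^ p) ∂μ
          ≤ ENNReal.ofReal (cConst p * (a / Real.sqrt N) ^ p) := by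
        rw [hlhs]
        refine hbound.trans (le_of_eq ?_)
        calc ∫⁻ t in Set.Ioi 0,
              ENNReal.ofReal ((2 * p) * (t ^ (p - 1) * Real.exp (-b * t ^ 2)))
            = ENNReal.ofReal
                (∫ t in Set.Ioi (0:ℝ), (2 * p) * (t ^ (p - 1) * Real.exp (-b * t ^ 2))) := by
              rw [ofReal_integral_eq_lintegral_ofReal hmaj_int ?_]
              filter_upwards [ae_restrict_mem measurableSet_Ioi] with t ht
              have ht' : (0:ℝ) < t := ht
              positivity
          _ = ENNReal.ofReal (cConst p * (a / Real.sqrt N) ^ p) := by rw [hval]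
      calc (∫⁻ ω, ENNReal.ofReal (|Z ω| ^ p) ∂μ).toReal
          ≤ (ENNReal.ofReal (cConst p * (a / Real.sqrt N) ^ p)).toReal :=
            ENNReal.toReal_mono ENNReal.ofReal_ne_top hchain
        _ = cConst p * (a / Real.sqrt N) ^ p :=
            ENNReal.toReal_ofReal
              (mul_nonneg hcnn (Real.rpow_nonneg hs.le p))
end

section
/- Let (E, ℰ) be a measurable space and X_1, …, X_N (N ≥ 1) independent E-valued random variables with X_k distributed according to a probability measure μ_k. Let h_1, …, h_N : E → ℝ be measurable functions with ∫_E h_k dμ_k = 0 for every k and σ(h) < ∞. Then for every ε ≥ 0, E[ exp(ε √N |m(X)(h)|) ] ≤ (1 + √(2π) ε σ(h)) · e^{ε² σ²(h)/8}. -/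
open MeasureTheory ProbabilityTheory Real

lemma hoeffding_core {p : ℝ} (hp0 : 0 ≤ p) (hp1 : p ≤ 1) (u : ℝ) :
    Real.log (1 - p + p * Real.exp u) ≤ u ^ 2 / 8 + p * u := by
  have hD : ∀ x : ℝ, 0 < 1 - p + p * Real.exp x := by
    intro x
    rcases eq_or_lt_of_le hp0 with h | h
    · simp [← h]
    · exact add_pos_of_nonneg_of_pos (by linarith) (mul_pos h (exp_pos x))
  set φ : ℝ → ℝ := fun x => x ^ 2 / 8 + p * x - Real.log (1 - p + p * Real.exp x) with hφ
  set g : ℝ → ℝ := fun x => x / 4 + p - p * Real.exp x / (1 - p + p * Real.exp x) with hg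
  have hDer : ∀ x, HasDerivAt φ (g x) x := by
    intro x
    have h1 : HasDerivAt (fun x : ℝ => 1 - p + p * Real.exp x) (p * Real.exp x) x := by
      simpa using ((Real.hasDerivAt_exp x).const_mul p).const_add (1 - p)
    have h2 : HasDerivAt (fun x : ℝ => Real.log (1 - p + p * Real.exp x))
        (p * Real.exp x / (1 - p + p * Real.exp x)) x := h1.log (hD x).ne'
    have h3 : HasDerivAt (fun x : ℝ => x ^ 2 / 8 + p * x) (x / 4 + p) x := by
      have : HasDerivAt (fun x : ℝ => x ^ 2 / 8 + p * x) (2 * x ^ 1 / 8 + p * 1) x := by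
        exact ((hasDerivAt_pow 2 x).div_const 8).add ((hasDerivAt_id x).const_mul p)
      convert this using 1; ring
    exact h3.sub h2
  have hgDer : ∀ x, HasDerivAt g
      (1 / 4 - p * Real.exp x * (1 - p) / (1 - p + p * Real.exp x) ^ 2) x := by
    intro x
    have h1 : HasDerivAt (fun x : ℝ => 1 - p + p * Real.exp x) (p * Real.exp x) x := by
      simpa using ((Real.hasDerivAt_exp x).const_mul p).const_add (1 - p)
    have h2 : HasDerivAt (fun x : ℝ => p * Real.exp x) (p * Real.exp x) x :=
      (Real.hasDerivAt_exp x).const_mul p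
    have h3 := h2.div h1 (hD x).ne'
    have h4 : HasDerivAt (fun x : ℝ => x / 4 + p) (1 / 4) x := by
      simpa using ((hasDerivAt_id x).div_const 4).add_const p
    have h5 := h4.sub h3
    refine h5.congr_deriv ?_
    congr 2
    ring
  have hgnn : ∀ x, 0 ≤ 1 / 4 - p * Real.exp x * (1 - p) / (1 - p + p * Real.exp x) ^ 2 := by
    intro x
    have hA : 0 ≤ p * Real.exp x := mul_nonneg hp0 (exp_pos x).le
    have hB : 0 ≤ 1 - p := by linarith
    have hDx := hD x
    rw [sub_nonneg, div_le_iff₀ (by positivity)]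
    nlinarith [sq_nonneg (p * Real.exp x - (1 - p))]
  have hgMono : Monotone g :=
    monotone_of_deriv_nonneg (fun x => (hgDer x).differentiableAt)
      (fun x => (hgDer x).deriv ▸ hgnn x)
  have hg0 : g 0 = 0 := by simp [hg]
  have hφ0 : φ 0 = 0 := by simp [hφ]
  have hφdiff : Differentiable ℝ φ := fun x => (hDer x).differentiableAt
  have hnonneg : 0 ≤ φ u := by
    rcases le_total 0 u with hu | hu
    · have : MonotoneOn φ (Set.Ici 0) := by
        apply monotoneOn_of_deriv_nonneg (convex_Ici 0) hφdiff.continuous.continuousOn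
          (fun x _ => hφdiff x |>.differentiableWithinAt)
        intro x hx
        rw [(hDer x).deriv]
        rw [interior_Ici] at hx
        calc (0:ℝ) = g 0 := hg0.symm
          _ ≤ g x := hgMono hx.le
      have := this (Set.self_mem_Ici) (Set.mem_Ici.2 hu) hu
      linarith [hφ0 ▸ this]
    · have : AntitoneOn φ (Set.Iic 0) := by
        apply antitoneOn_of_deriv_nonpos (convex_Iic 0) hφdiff.continuous.continuousOn
          (fun x _ => hφdiff x |>.differentiableWithinAt)
        intro x hx
        rw [(hDer x).deriv]
        rw [interior_Iic] at hx
        calc g x ≤ g 0 := hgMono hx.le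
          _ = 0 := hg0
      have := this (Set.mem_Iic.2 hu) (Set.self_mem_Iic) hu
      linarith [hφ0 ▸ this]
    -- conclude
  have := hnonneg
  simp only [hφ] at this
  linarith

lemma integrable_of_bound {α : Type*} [MeasurableSpace α] (ν : Measure α) [IsFiniteMeasure ν]
    {f : α → ℝ} (hf : AEStronglyMeasurable f ν) (C : ℝ) (hC : ∀ x, |f x| ≤ C) :
    Integrable f ν :=
  (integrable_const C).mono' hf (Filter.Eventually.of_forall (fun x => by
    simpa [Real.norm_eq_abs] using hC x))

lemma hoeffding_lemma {E : Type*} [MeasurableSpace E] (ν : Measure E) [IsProbabilityMeasure ν]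
    {h : E → ℝ} (hm : Measurable h) {a b : ℝ} (hab : ∀ x, h x ∈ Set.Icc a b)
    (hc : ∫ x, h x ∂ν = 0) (t : ℝ) :
    ∫ x, Real.exp (t * h x) ∂ν ≤ Real.exp (t ^ 2 * (b - a) ^ 2 / 8) := by
  have hE : Nonempty E := by
    by_contra hne
    rw [not_nonempty_iff] at hne
    have := measure_univ (μ := ν)
    simp [Set.univ_eq_empty_iff.2 hne] at this
  obtain ⟨x₀⟩ := hE
  have hab' : a ≤ b := le_trans (hab x₀).1 (hab x₀).2
  have hbound : ∀ x, |h x| ≤ max |a| |b| := fun x =>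
    abs_le_max_abs_abs (hab x).1 (hab x).2
  have hint : Integrable h ν := integrable_of_bound ν hm.aestronglyMeasurable _ hbound
  -- a ≤ 0 ≤ b
  have ha0 : a ≤ 0 := by
    have : ∫ _ : E, a ∂ν ≤ ∫ x, h x ∂ν :=
      integral_mono (integrable_const a) hint (fun x => (hab x).1)
    simpa [hc] using this
  have hb0 : 0 ≤ b := by
    have : ∫ x, h x ∂ν ≤ ∫ _ : E, b ∂ν :=
      integral_mono hint (integrable_const b) (fun x => (hab x).2)
    simpa [hc] using this
  have hintexp : Integrable (fun x => Real.exp (t * h x)) ν := by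
    apply integrable_of_bound ν ((hm.const_mul t).exp).aestronglyMeasurable
      (Real.exp (|t| * max |a| |b|))
    intro x
    rw [abs_of_pos (exp_pos _), Real.exp_le_exp]
    calc t * h x ≤ |t * h x| := le_abs_self _
      _ = |t| * |h x| := abs_mul _ _
      _ ≤ |t| * max |a| |b| := by
          exact mul_le_mul_of_nonneg_left (hbound x) (abs_nonneg t)
  rcases eq_or_lt_of_le hab' with heq | hlt
  · -- a = b : h ≡ a and ∫ h = 0 forces a = 0
    have hha : ∀ x, h x = a := fun x => le_antisymm (heq ▸ (hab x).2) (hab x).1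
    have : a = 0 := by
      have : ∫ x, h x ∂ν = a := by simp [funext hha]
      linarith [hc ▸ this]
    have hfun : (fun x => Real.exp (t * h x)) = fun _ => (1:ℝ) := by
      funext x; rw [hha x, this, mul_zero, Real.exp_zero]
    rw [hfun, integral_const]
    simp only [probReal_univ, ENNReal.toReal_one, smul_eq_mul, one_mul, mul_one, one_smul]
    exact Real.one_le_exp (by positivity)
  · -- a < b
    set p : ℝ := -a / (b - a) with hp
    have hba : 0 < b - a := by linarith
    have hp0 : 0 ≤ p := div_nonneg (by linarith) hba.le
    have hp1 : p ≤ 1 := by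
      rw [hp, div_le_one hba]; linarith
    -- pointwise convexity bound
    have hpt : ∀ x, Real.exp (t * h x) ≤
        (b - h x) / (b - a) * Real.exp (t * a) + (h x - a) / (b - a) * Real.exp (t * b) := by
      intro x
      have h1 : 0 ≤ (b - h x) / (b - a) := by
        apply div_nonneg _ hba.le; linarith [(hab x).2]
      have h2 : 0 ≤ (h x - a) / (b - a) := by
        apply div_nonneg _ hba.le; linarith [(hab x).1]
      have h3 : (b - h x) / (b - a) + (h x - a) / (b - a) = 1 := by
        field_simp; ring
      have := convexOn_exp.2 (Set.mem_univ (t * a)) (Set.mem_univ (t * b)) h1 h2 h3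
      simp only [smul_eq_mul] at this
      refine le_trans (le_of_eq ?_) this
      congr 1
      rw [div_mul_eq_mul_div, div_mul_eq_mul_div, ← add_div, eq_div_iff hba.ne']
      ring
    -- integrate
    have hintaffine : Integrable (fun x =>
        (b - h x) / (b - a) * Real.exp (t * a) + (h x - a) / (b - a) * Real.exp (t * b)) ν := by
      apply Integrable.add
      · exact ((((integrable_const b).sub hint).div_const _).mul_const _)
      · exact (((hint.sub (integrable_const a)).div_const _).mul_const _)
    have hIle : ∫ x, Real.exp (t * h x) ∂ν ≤
        (1 - p) * Real.exp (t * a) + p * Real.exp (t * b) := by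
      calc ∫ x, Real.exp (t * h x) ∂ν ≤ ∫ x, ((b - h x) / (b - a) * Real.exp (t * a)
            + (h x - a) / (b - a) * Real.exp (t * b)) ∂ν :=
          integral_mono hintexp hintaffine hpt
        _ = ∫ x, (((1 - p) * Real.exp (t * a) + p * Real.exp (t * b)) +
              ((Real.exp (t * b) - Real.exp (t * a)) / (b - a)) * h x) ∂ν := by
            congr 1; funext x
            rw [hp]; field_simp; ring
        _ = (1 - p) * Real.exp (t * a) + p * Real.exp (t * b) := by
            rw [integral_add (integrable_const _) (hint.const_mul _), integral_const,
              integral_const_mul, hc]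
            simp
    -- apply the core bound with u = t * (b - a)
    refine hIle.trans ?_
    have hkey := hoeffding_core hp0 hp1 (t * (b - a))
    have hD : (0:ℝ) < 1 - p + p * Real.exp (t * (b - a)) := by
      rcases eq_or_lt_of_le hp0 with h | h
      · simp [← h]
      · exact add_pos_of_nonneg_of_pos (by linarith) (mul_pos h (exp_pos _))
    have hlog : 1 - p + p * Real.exp (t * (b - a)) ≤
        Real.exp ((t * (b - a)) ^ 2 / 8 + p * (t * (b - a))) := by
      rw [← Real.log_le_iff_le_exp hD] at *
      exact hkey
    have expand : (1 - p) * Real.exp (t * a) + p * Real.exp (t * b) =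
        Real.exp (-(p * (t * (b - a)))) * (1 - p + p * Real.exp (t * (b - a))) := by
      have hpa : p * (b - a) = -a := by rw [hp]; field_simp
      have e1 : -(p * (t * (b - a))) = t * a := by
        rw [show p * (t * (b - a)) = t * (p * (b - a)) by ring, hpa]; ring
      have e2 : -(p * (t * (b - a))) + t * (b - a) = t * b := by
        rw [show p * (t * (b - a)) = t * (p * (b - a)) by ring, hpa]; ring
      have e3 : Real.exp (-(p * (t * (b - a)))) * (p * Real.exp (t * (b - a)))
          = p * Real.exp (t * b) := by
        rw [mul_comm p (Real.exp _), ← mul_assoc, ← Real.exp_add, e2]; ring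
      rw [mul_add, e3, e1]
      ring
    rw [expand]
    calc Real.exp (-(p * (t * (b - a)))) * (1 - p + p * Real.exp (t * (b - a)))
        ≤ Real.exp (-(p * (t * (b - a)))) *
          Real.exp ((t * (b - a)) ^ 2 / 8 + p * (t * (b - a))) := by
          exact mul_le_mul_of_nonneg_left hlog (exp_pos _).le
      _ = Real.exp (t ^ 2 * (b - a) ^ 2 / 8) := by
          rw [← Real.exp_add]; congr 1; ring

lemma osc_props {E : Type*} [Nonempty E] {h : E → ℝ}
    (hB : BddAbove (Set.range fun q : E × E => |h q.1 - h q.2|)) :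
    (0 ≤ osc h) ∧ (∀ x, h x ∈ Set.Icc (⨅ y, h y) (⨆ y, h y)) ∧
      (⨆ y, h y) - (⨅ y, h y) ≤ osc h := by
  obtain ⟨x₀⟩ := (inferInstance : Nonempty E)
  have hdiff : ∀ x y : E, h x - h y ≤ osc h := fun x y =>
    (le_abs_self _).trans (le_ciSup hB (x, y))
  have hnn : 0 ≤ osc h := by
    have := le_ciSup hB (x₀, x₀)
    simpa [osc] using this
  have hbdd : BddAbove (Set.range h) :=
    ⟨h x₀ + osc h, by rintro _ ⟨x, rfl⟩; linarith [hdiff x x₀]⟩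
  have hbddb : BddBelow (Set.range h) :=
    ⟨h x₀ - osc h, by rintro _ ⟨x, rfl⟩; linarith [hdiff x₀ x]⟩
  refine ⟨hnn, fun x => ⟨ciInf_le hbddb x, le_ciSup hbdd x⟩, ?_⟩
  rw [sub_le_iff_le_add]
  apply ciSup_le
  intro x
  rw [add_comm, ← sub_le_iff_le_add]
  apply le_ciInf
  intro y
  linarith [hdiff x y]

lemma sqrt_two_pi_ge : (5:ℝ)/2 ≤ Real.sqrt (2 * Real.pi) := by
  rw [show (5:ℝ)/2 = Real.sqrt ((5/2)^2) by rw [Real.sqrt_sq]; norm_num]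
  apply Real.sqrt_le_sqrt
  nlinarith [Real.pi_gt_d6]

lemma key_ineq {u : ℝ} (hu : 0 ≤ u) :
    (1 - Real.sqrt (2 * Real.pi) * u) * Real.exp (u ^ 2 / 8) ≤ 1 - u / 2 := by
  set s : ℝ := Real.sqrt (2 * Real.pi) with hs
  have hs5 : (5:ℝ)/2 ≤ s := sqrt_two_pi_ge
  set G : ℝ → ℝ := fun x => (1 - s * x) * Real.exp (x ^ 2 / 8) + x / 2 with hG
  have hDer : ∀ x : ℝ, HasDerivAt G
      ((-s) * Real.exp (x ^ 2 / 8) + (1 - s * x) * (Real.exp (x ^ 2 / 8) * (x / 4)) + 1/2) x := by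
    intro x
    have h1 : HasDerivAt (fun x : ℝ => 1 - s * x) (-s) x := by
      simpa using ((hasDerivAt_id x).const_mul s).const_sub 1
    have h2 : HasDerivAt (fun x : ℝ => x ^ 2 / 8) (x / 4) x := by
      have := (hasDerivAt_pow 2 x).div_const 8
      refine this.congr_deriv ?_; rw [show (2:ℕ) - 1 = 1 from rfl]; ring
    have h3 : HasDerivAt (fun x : ℝ => Real.exp (x ^ 2 / 8))
        (Real.exp (x ^ 2 / 8) * (x / 4)) x := (Real.hasDerivAt_exp _).comp x h2
    have h4 := (h1.mul h3).add ((hasDerivAt_id x).div_const 2)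
    exact h4
  have hder_nonpos : ∀ x : ℝ, 0 ≤ x →
      (-s) * Real.exp (x ^ 2 / 8) + (1 - s * x) * (Real.exp (x ^ 2 / 8) * (x / 4)) + 1/2 ≤ 0 := by
    intro x hx
    have hA : -s + (1 - s * x) * (x / 4) ≤ -1/2 := by
      nlinarith [mul_nonneg (by linarith : (0:ℝ) ≤ s - 5/2) (sq_nonneg x), sq_nonneg (x - 1/5)]
    have hexp1 : 1 ≤ Real.exp (x ^ 2 / 8) := Real.one_le_exp (by positivity)
    have : (-s) * Real.exp (x ^ 2 / 8) + (1 - s * x) * (Real.exp (x ^ 2 / 8) * (x / 4))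
        = Real.exp (x ^ 2 / 8) * (-s + (1 - s * x) * (x / 4)) := by ring
    rw [this]
    nlinarith [Real.exp_pos (x ^ 2 / 8)]
  have hanti : AntitoneOn G (Set.Ici 0) := by
    apply antitoneOn_of_deriv_nonpos (convex_Ici 0)
    · exact (Continuous.continuousOn (by fun_prop))
    · intro x _
      exact (hDer x).differentiableAt.differentiableWithinAt
    · intro x hx
      rw [interior_Ici] at hx
      rw [(hDer x).deriv]
      exact hder_nonpos x hx.le
  have hG0 : G 0 = 1 := by simp [hG]
  have := hanti Set.self_mem_Ici (Set.mem_Ici.2 hu) hu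
  rw [hG0] at this
  simp only [hG] at this
  linarith

set_option maxHeartbeats 1000000 in
/-- Corollary 1: simplified bound on the moment-generating function of the
centered empirical measure `m(X)(h) = (1/N) ∑ₖ hₖ(Xₖ)`, where
`σ(h) = √((1/N) ∑ₖ osc(hₖ)²)`. -/
theorem mgf_empirical_measure_simple_bound
    {E : Type*} [MeasurableSpace E] {Ω : Type*} [MeasurableSpace Ω]
    (μ : Measure Ω) [IsProbabilityMeasure μ]
    (N : ℕ) (hN : 1 ≤ N)
    (X : Fin N → Ω → E) (μs : Fin N → Measure E)
    [∀ k, IsProbabilityMeasure (μs k)]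
    (hmeas : ∀ k, Measurable (X k))
    (hindep : iIndepFun X μ)
    (hlaw : ∀ k, Measure.map (X k) μ = μs k)
    (h : Fin N → E → ℝ) (hmh : ∀ k, Measurable (h k))
    (hosc : ∀ k, BddAbove (Set.range fun q : E × E => |h k q.1 - h k q.2|))
    (hcentered : ∀ k, ∫ x, h k x ∂(μs k) = 0)
    (ε : ℝ) (hε : 0 ≤ ε) :
    (∫ ω, Real.exp (ε * Real.sqrt N * |(1 / (N : ℝ)) * ∑ k, h k (X k ω)|) ∂μ) ≤
      (1 + Real.sqrt (2 * Real.pi) * ε *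
          Real.sqrt ((1 / (N : ℝ)) * ∑ k, (osc (h k)) ^ 2)) *
        Real.exp (ε ^ 2 / 8 * ((1 / (N : ℝ)) * ∑ k, (osc (h k)) ^ 2)) := by
  classical
  have hNpos : (0:ℝ) < N := by exact_mod_cast hN
  have hE : Nonempty E := by
    by_contra hne
    rw [not_nonempty_iff] at hne
    have := measure_univ (μ := μs ⟨0, hN⟩)
    simp [Set.univ_eq_empty_iff.2 hne] at this
  -- basic data
  set a : Fin N → ℝ := fun k => ⨅ y, h k y with ha
  set b : Fin N → ℝ := fun k => ⨆ y, h k y with hb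
  have hprops := fun k => osc_props (hosc k)
  have hoscnn : ∀ k, 0 ≤ osc (h k) := fun k => (hprops k).1
  have hmem : ∀ k x, h k x ∈ Set.Icc (a k) (b k) := fun k => (hprops k).2.1
  have hba : ∀ k, b k - a k ≤ osc (h k) := fun k => (hprops k).2.2
  have hab : ∀ k, a k ≤ b k := fun k => by
    obtain ⟨x₀⟩ := hE; exact le_trans (hmem k x₀).1 (hmem k x₀).2
  set Y : Fin N → Ω → ℝ := fun k ω => h k (X k ω) with hYdef
  have hYmeas : ∀ k, Measurable (Y k) := fun k => (hmh k).comp (hmeas k)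
  have hYindep : iIndepFun Y μ := hindep.comp h hmh
  have hYmem : ∀ k ω, Y k ω ∈ Set.Icc (a k) (b k) := fun k ω => hmem k (X k ω)
  set C : Fin N → ℝ := fun k => max |a k| |b k| with hC
  have hYbound : ∀ k ω, |Y k ω| ≤ C k := fun k ω =>
    abs_le_max_abs_abs (hYmem k ω).1 (hYmem k ω).2
  -- law transfer
  have hlawint : ∀ k (g : E → ℝ), Measurable g →
      ∫ ω, g (X k ω) ∂μ = ∫ x, g x ∂(μs k) := by
    intro k g hg
    rw [← hlaw k, integral_map (hmeas k).aemeasurable hg.aestronglyMeasurable]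
  have hYmean : ∀ k, ∫ ω, Y k ω ∂μ = 0 := fun k => by
    rw [hYdef]; rw [hlawint k (h k) (hmh k)]; exact hcentered k
  set T : Ω → ℝ := fun ω => ∑ k, Y k ω with hT
  have hTmeas : Measurable T := by
    apply Finset.measurable_sum
    intro k _; exact hYmeas k
  set Cb : ℝ := ∑ k, C k with hCb
  have hTbound : ∀ ω, |T ω| ≤ Cb := fun ω =>
    (Finset.abs_sum_le_sum_abs _ _).trans
      (Finset.sum_le_sum fun k _ => hYbound k ω)
  set v : ℝ := ∑ k, (osc (h k)) ^ 2 with hv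
  have hv0 : 0 ≤ v := Finset.sum_nonneg fun k _ => sq_nonneg _
  -- MGF bound
  have hmgf : ∀ s : ℝ, ∫ ω, Real.exp (s * T ω) ∂μ ≤ Real.exp (s ^ 2 * v / 8) := by
    intro s
    have h1 : ∫ ω, Real.exp (s * T ω) ∂μ = mgf (∑ k, Y k) μ s := by
      rw [mgf]; congr 1; funext ω; rw [hT]; simp [Finset.sum_apply]
    rw [h1, hYindep.mgf_sum hYmeas Finset.univ]
    calc ∏ k, mgf (Y k) μ s ≤ ∏ k, Real.exp (s ^ 2 * (osc (h k)) ^ 2 / 8) := by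
          apply Finset.prod_le_prod
          · intro k _; exact mgf_nonneg
          · intro k _
            have e1 : mgf (Y k) μ s = ∫ x, Real.exp (s * h k x) ∂(μs k) := by
              rw [mgf, ← hlawint k (fun x => Real.exp (s * h k x)) ((hmh k).const_mul s).exp]
            rw [e1]
            refine (hoeffding_lemma (μs k) (hmh k) (hmem k) (hcentered k) s).trans ?_
            apply Real.exp_le_exp.2
            have : (b k - a k) ^ 2 ≤ (osc (h k)) ^ 2 :=
              pow_le_pow_left₀ (by linarith [hab k]) (hba k) 2
            nlinarith [sq_nonneg s]
      _ = Real.exp (s ^ 2 * v / 8) := by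
          rw [← Real.exp_sum]
          congr 1
          rw [hv, Finset.mul_sum, Finset.sum_div]
  -- variance bound
  have hmem2 : ∀ k, MemLp (Y k) 2 μ := fun k =>
    memLp_of_bounded (Filter.Eventually.of_forall (hYmem k)) (hYmeas k).aestronglyMeasurable 2
  have hTmem2 : MemLp T 2 μ := by
    have : MemLp (∑ k, Y k) 2 μ := memLp_finset_sum' _ (fun k _ => hmem2 k)
    have he : T = ∑ k, Y k := by funext ω; rw [hT, Finset.sum_apply]
    rwa [he]
  have hYint : ∀ k, Integrable (Y k) μ := fun k => (hmem2 k).integrable one_le_two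
  have hTint : Integrable T μ := integrable_of_bound μ hTmeas.aestronglyMeasurable Cb hTbound
  have hTabsint : Integrable (fun ω => |T ω|) μ := hTint.abs
  have hTmean : ∫ ω, T ω ∂μ = 0 := by
    rw [hT]
    rw [integral_finset_sum _ (fun k _ => hYint k)]
    simp [hYmean]
  -- variance of each Y k
  have hvark : ∀ k, variance (Y k) μ ≤ (osc (h k)) ^ 2 / 4 := by
    intro k
    rw [variance_eq_sub (hmem2 k)]
    have e1 : μ[(Y k) ^ 2] = ∫ x, (h k x) ^ 2 ∂(μs k) := by
      rw [show ((Y k) ^ 2 : Ω → ℝ) = fun ω => (h k (X k ω)) ^ 2 by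
        funext ω; simp [Pi.pow_apply, hYdef]]
      exact hlawint k (fun x => (h k x) ^ 2) ((hmh k).pow_const 2)
    rw [hYmean k, e1]
    rw [show (0:ℝ) ^ 2 = 0 by norm_num, sub_zero]
    -- center at c = (a+b)/2
    set c : ℝ := (a k + b k) / 2 with hc
    have hintk : Integrable (h k) (μs k) :=
      integrable_of_bound (μs k) (hmh k).aestronglyMeasurable (C k)
        (fun x => abs_le_max_abs_abs (hmem k x).1 (hmem k x).2)
    have hintk2 : Integrable (fun x => (h k x - c) ^ 2) (μs k) := by
      apply integrable_of_bound (μs k) (((hmh k).sub_const c).pow_const 2).aestronglyMeasurable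
        ((C k + |c|) ^ 2)
      intro x
      rw [abs_of_nonneg (sq_nonneg _)]
      have hb1 : |h k x| ≤ C k := abs_le_max_abs_abs (hmem k x).1 (hmem k x).2
      have hb2 := abs_le.1 hb1
      have hb3 : |h k x - c| ≤ C k + |c| := by
        rw [abs_le]
        constructor
        · linarith [le_abs_self c, neg_abs_le c]
        · linarith [le_abs_self c, neg_abs_le c]
      calc (h k x - c) ^ 2 = |h k x - c| ^ 2 := (sq_abs _).symm
        _ ≤ (C k + |c|) ^ 2 := pow_le_pow_left₀ (abs_nonneg _) hb3 2
    have hdecomp : ∀ x : E, (h k x) ^ 2 = (h k x - c) ^ 2 + (2 * c) * h k x - c ^ 2 := by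
      intro x; ring
    calc ∫ x, (h k x) ^ 2 ∂(μs k)
        = ∫ x, ((h k x - c) ^ 2 + (2 * c) * h k x - c ^ 2) ∂(μs k) := by
          congr 1; funext x; exact hdecomp x
      _ = (∫ x, ((h k x - c) ^ 2 + (2 * c) * h k x) ∂(μs k)) - ∫ _ : E, c ^ 2 ∂(μs k) :=
          integral_sub (hintk2.add (hintk.const_mul _)) (integrable_const _)
      _ = (∫ x, (h k x - c) ^ 2 ∂(μs k)) + (2 * c) * (∫ x, h k x ∂(μs k)) - c ^ 2 := by
          rw [integral_add hintk2 (hintk.const_mul _), integral_const_mul, integral_const]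
          simp
      _ ≤ ((b k - a k) / 2) ^ 2 + 0 - 0 := by
          rw [hcentered k]
          have : ∫ x, (h k x - c) ^ 2 ∂(μs k) ≤ ∫ _ : E, ((b k - a k) / 2) ^ 2 ∂(μs k) := by
            apply integral_mono hintk2 (integrable_const _)
            intro x
            apply sq_le_sq'
            · rw [hc]; linarith [(hmem k x).1]
            · rw [hc]; linarith [(hmem k x).2]
          simp only [integral_const, probReal_univ, ENNReal.toReal_one, smul_eq_mul, one_mul] at this
          nlinarith [sq_nonneg c]
      _ ≤ (osc (h k)) ^ 2 / 4 := by
          have : (b k - a k) ^ 2 ≤ (osc (h k)) ^ 2 :=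
            pow_le_pow_left₀ (by linarith [hab k]) (hba k) 2
          nlinarith
  -- variance of T
  have hvarT : variance T μ ≤ v / 4 := by
    have he : T = ∑ k, Y k := by funext ω; rw [hT, Finset.sum_apply]
    rw [he, IndepFun.variance_sum (fun k _ => hmem2 k)
      (fun i _ j _ hij => hYindep.indepFun hij)]
    calc ∑ k, variance (Y k) μ ≤ ∑ k, (osc (h k)) ^ 2 / 4 :=
          Finset.sum_le_sum fun k _ => hvark k
      _ = v / 4 := by rw [hv, Finset.sum_div]
  -- E|T| ≤ √v / 2
  have hETabs : ∫ ω, |T ω| ∂μ ≤ Real.sqrt v / 2 := by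
    have habs2 : MemLp (fun ω => |T ω|) 2 μ := hTmem2.abs
    have h1 : variance (fun ω => |T ω|) μ =
        μ[(fun ω => |T ω|) ^ 2] - (∫ ω, |T ω| ∂μ) ^ 2 := variance_eq_sub habs2
    have h2 : variance T μ = μ[T ^ 2] - 0 ^ 2 := by
      rw [variance_eq_sub hTmem2, show μ[T] = ∫ ω, T ω ∂μ from rfl, hTmean]
    have h3 : μ[(fun ω => |T ω|) ^ 2] = μ[T ^ 2] := by
      congr 1; funext ω; simp [sq_abs]
    have h4 := variance_nonneg (fun ω => |T ω|) μ
    have h5 : (∫ ω, |T ω| ∂μ) ^ 2 ≤ v / 4 := by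
      rw [h1, h3] at h4
      have := hvarT
      rw [h2] at this
      linarith
    have h6 : 0 ≤ ∫ ω, |T ω| ∂μ := integral_nonneg fun ω => abs_nonneg _
    calc ∫ ω, |T ω| ∂μ = Real.sqrt ((∫ ω, |T ω| ∂μ) ^ 2) := (Real.sqrt_sq h6).symm
      _ ≤ Real.sqrt (v / 4) := Real.sqrt_le_sqrt h5
      _ = Real.sqrt v / 2 := by
          rw [Real.sqrt_div hv0, show Real.sqrt 4 = 2 by
            rw [show (4:ℝ) = 2 ^ 2 by norm_num, Real.sqrt_sq (by norm_num : (0:ℝ) ≤ 2)]]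
  -- abbreviations
  set lam : ℝ := ε / Real.sqrt N with hlam
  have hsN : (0:ℝ) < Real.sqrt N := Real.sqrt_pos.2 hNpos
  have hlam0 : 0 ≤ lam := div_nonneg hε hsN.le
  set u : ℝ := lam * Real.sqrt v with hu
  have hu0 : 0 ≤ u := mul_nonneg hlam0 (Real.sqrt_nonneg v)
  have hu2 : u ^ 2 = lam ^ 2 * v := by rw [hu, mul_pow, Real.sq_sqrt hv0]
  -- rewrite LHS
  have hLHS : ∀ ω, ε * Real.sqrt N * |(1 / (N : ℝ)) * ∑ k, h k (X k ω)| = lam * |T ω| := by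
    intro ω
    have hTw : T ω = ∑ k, h k (X k ω) := by rw [hT]
    rw [← hTw, abs_mul, abs_of_pos (by positivity : (0:ℝ) < 1 / (N:ℝ))]
    have : ε * Real.sqrt N * (1 / (N:ℝ)) = lam := by
      have hss : Real.sqrt N * Real.sqrt N = (N:ℝ) := Real.mul_self_sqrt hNpos.le
      rw [hlam]
      field_simp
      linear_combination ε * hss
    rw [← mul_assoc, this]
  -- integrability of the exponentials
  have hexpint : ∀ s : ℝ, Integrable (fun ω => Real.exp (s * T ω)) μ := by
    intro s
    apply integrable_of_bound μ ((hTmeas.const_mul s).exp).aestronglyMeasurable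
      (Real.exp (|s| * Cb))
    intro ω
    rw [abs_of_pos (Real.exp_pos _), Real.exp_le_exp]
    calc s * T ω ≤ |s * T ω| := le_abs_self _
      _ = |s| * |T ω| := abs_mul _ _
      _ ≤ |s| * Cb := mul_le_mul_of_nonneg_left (hTbound ω) (abs_nonneg s)
  have hexpabsint : ∀ s : ℝ, Integrable (fun ω => Real.exp (s * |T ω|)) μ := by
    intro s
    apply integrable_of_bound μ ((hTmeas.abs.const_mul s).exp).aestronglyMeasurable
      (Real.exp (|s| * Cb))
    intro ω
    rw [abs_of_pos (Real.exp_pos _), Real.exp_le_exp]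
    calc s * |T ω| ≤ |s| * |T ω| :=
          mul_le_mul_of_nonneg_right (le_abs_self s) (abs_nonneg _)
      _ ≤ |s| * Cb := mul_le_mul_of_nonneg_left (hTbound ω) (abs_nonneg s)
  -- pointwise identity
  have hid : ∀ ω, Real.exp (lam * |T ω|) =
      Real.exp (lam * T ω) + Real.exp (-lam * T ω) - Real.exp (-lam * |T ω|) := by
    intro ω
    rcases le_or_gt 0 (T ω) with hω | hω
    · rw [abs_of_nonneg hω]; ring_nf
    · rw [abs_of_neg hω]; ring_nf
  -- lower bound on E exp(-lam |T|)
  have hlow : 1 - lam * ∫ ω, |T ω| ∂μ ≤ ∫ ω, Real.exp (-lam * |T ω|) ∂μ := by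
    have hmono : ∫ ω, (1 - lam * |T ω|) ∂μ ≤ ∫ ω, Real.exp (-lam * |T ω|) ∂μ := by
      apply integral_mono ((integrable_const (1:ℝ)).sub (hTabsint.const_mul lam))
        (hexpabsint (-lam))
      intro ω
      simp only [Pi.sub_apply]
      have := Real.add_one_le_exp (-lam * |T ω|)
      linarith
    calc 1 - lam * ∫ ω, |T ω| ∂μ = ∫ ω, (1 - lam * |T ω|) ∂μ := by
          rw [integral_sub (integrable_const 1) (hTabsint.const_mul lam),
            integral_const, integral_const_mul]
          simp
      _ ≤ _ := hmono
  -- upper bounds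
  have hup1 : ∫ ω, Real.exp (lam * T ω) ∂μ ≤ Real.exp (u ^ 2 / 8) := by
    refine (hmgf lam).trans_eq ?_; rw [hu2]
  have hup2 : ∫ ω, Real.exp (-lam * T ω) ∂μ ≤ Real.exp (u ^ 2 / 8) := by
    refine (hmgf (-lam)).trans_eq ?_; rw [hu2]; ring_nf
  -- main chain
  have hmain : ∫ ω, Real.exp (lam * |T ω|) ∂μ ≤
      (1 + Real.sqrt (2 * Real.pi) * u) * Real.exp (u ^ 2 / 8) := by
    have hsplit : ∫ ω, Real.exp (lam * |T ω|) ∂μ =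
        (∫ ω, Real.exp (lam * T ω) ∂μ) + (∫ ω, Real.exp (-lam * T ω) ∂μ)
          - ∫ ω, Real.exp (-lam * |T ω|) ∂μ := by
      calc ∫ ω, Real.exp (lam * |T ω|) ∂μ
          = ∫ ω, (Real.exp (lam * T ω) + Real.exp (-lam * T ω)
              - Real.exp (-lam * |T ω|)) ∂μ := by
            congr 1; funext ω; exact hid ω
        _ = (∫ ω, (Real.exp (lam * T ω) + Real.exp (-lam * T ω)) ∂μ)
              - ∫ ω, Real.exp (-lam * |T ω|) ∂μ := by
            exact integral_sub ((hexpint lam).add (hexpint (-lam))) (hexpabsint (-lam))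
        _ = _ := by rw [integral_add (hexpint lam) (hexpint (-lam))]
    rw [hsplit]
    have hEabs : lam * ∫ ω, |T ω| ∂μ ≤ u / 2 := by
      rw [hu]
      calc lam * ∫ ω, |T ω| ∂μ ≤ lam * (Real.sqrt v / 2) :=
            mul_le_mul_of_nonneg_left hETabs hlam0
        _ = lam * Real.sqrt v / 2 := by ring
    have hK := key_ineq hu0
    nlinarith [Real.exp_pos (u ^ 2 / 8), hup1, hup2, hlow, hEabs]
  -- convert to the stated form
  have hrw1 : Real.sqrt ((1 / (N : ℝ)) * v) = Real.sqrt v / Real.sqrt N := by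
    rw [one_div, Real.sqrt_mul (by positivity) v, Real.sqrt_inv]
    ring
  have hrw2 : Real.sqrt (2 * Real.pi) * ε * Real.sqrt ((1 / (N : ℝ)) * v) =
      Real.sqrt (2 * Real.pi) * u := by
    rw [hrw1, hu, hlam]; ring
  have hrw3 : ε ^ 2 / 8 * ((1 / (N : ℝ)) * v) = u ^ 2 / 8 := by
    rw [hu2, hlam, div_pow, Real.sq_sqrt hNpos.le]; ring
  calc (∫ ω, Real.exp (ε * Real.sqrt N * |(1 / (N : ℝ)) * ∑ k, h k (X k ω)|) ∂μ)
      = ∫ ω, Real.exp (lam * |T ω|) ∂μ := by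
        congr 1; funext ω; rw [hLHS ω]
    _ ≤ (1 + Real.sqrt (2 * Real.pi) * u) * Real.exp (u ^ 2 / 8) := hmain
    _ = (1 + Real.sqrt (2 * Real.pi) * ε *
          Real.sqrt ((1 / (N : ℝ)) * ∑ k, (osc (h k)) ^ 2)) *
        Real.exp (ε ^ 2 / 8 * ((1 / (N : ℝ)) * ∑ k, (osc (h k)) ^ 2)) := by
        rw [← hv, hrw3, ← hrw2, mul_assoc]
end

section
/- Let (E₁, ℰ₁) and (E₂, ℰ₂) be measurable spaces, let G : E₁ → ℝ be a bounded measurable function with inf_{x ∈ E₁} G(x) > 0, and let P be a Markov kernel from E₁ to E₂ with Dobrushin contraction coefficient β(P) = sup{ sup_{A ∈ ℰ₂} |P(x, A) − P(y, A)| : x, y ∈ E₁ }. For a probability measure ν on E₁ let Φ(ν) be the probability measure on E₂ defined by Φ(ν)(A) = (∫_{E₁} G(x) P(x, A) ν(dx)) / (∫_{E₁} G dν). Then for any two probability measures η, μ on E₁ and any bounded measurable h₂ : E₂ → ℝ with osc(h₂) ≤ 1, there exists a bounded measurable h₁ : E₁ → ℝ with osc(h₁) ≤ 1 such that |Φ(η)(h₂)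 − Φ(μ)(h₂)| ≤ β(P) · (sup_{x} G(x) / ∫_{E₁} G dη) · (2 − inf_{x} G(x) / sup_{x} G(x)) · |∫_{E₁} h₁ dη − ∫_{E₁} h₁ dμ|. -/
open MeasureTheory ProbabilityTheory Real

/-- The Dobrushin contraction coefficient of a Markov kernel:
`β(P) = sup { |P(x,A) − P(y,A)| : x, y, A measurable }`. -/
noncomputable def dobrushin {E₁ E₂ : Type*} [MeasurableSpace E₁] [MeasurableSpace E₂]
    (P : ProbabilityTheory.Kernel E₁ E₂) : ℝ :=
  ⨆ x : E₁, ⨆ y : E₁, ⨆ A : {s : Set E₂ // MeasurableSet s},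
    |(P x A.1).toReal - (P y A.1).toReal|

/-- The Feynman-Kac update operator `Φ(ν) = Ψ(ν)P`, where `Ψ` is the
Boltzmann-Gibbs transformation with potential `G`:
`Φ(ν)(A) = (∫ G(x) P(x,A) ν(dx)) / ν(G)`. -/
noncomputable def fkUpdate {E₁ E₂ : Type*} [MeasurableSpace E₁] [MeasurableSpace E₂]
    (G : E₁ → ℝ) (P : ProbabilityTheory.Kernel E₁ E₂) (ν : Measure E₁) :
    Measure E₂ :=
  (∫⁻ x, ENNReal.ofReal (G x) ∂ν)⁻¹ •
    ((ν.withDensity fun x => ENNReal.ofReal (G x)).bind fun x => P x)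

lemma integrable_of_abs_le {E : Type*} [MeasurableSpace E] {μ : Measure E} [IsFiniteMeasure μ]
    {f : E → ℝ} (hf : AEStronglyMeasurable f μ) {C : ℝ} (h : ∀ x, |f x| ≤ C) :
    Integrable f μ :=
  (integrable_const C).mono' hf (ae_of_all _ (by simpa [Real.norm_eq_abs] using h))

lemma one_sided_tv {E : Type*} [MeasurableSpace E]
    (p q : Measure E) [IsProbabilityMeasure p] [IsProbabilityMeasure q]
    (h : E → ℝ) (hm : Measurable h) {C : ℝ} (hb : ∀ z, |h z| ≤ C)
    (hosc : ∀ x y, h x - h y ≤ 1)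
    {β : ℝ} (hβ : ∀ A : Set E, MeasurableSet A → (p A).toReal - (q A).toReal ≤ β) :
    (∫ z, h z ∂p) - ∫ z, h z ∂q ≤ β := by
  have hE : Nonempty E := by
    by_contra hne
    rw [not_nonempty_iff] at hne
    have h0 := measure_univ (μ := p)
    rw [Set.univ_eq_empty_iff.2 hne] at h0
    simp at h0
  have hbb : BddBelow (Set.range h) := ⟨-C, by rintro _ ⟨z, rfl⟩; linarith [abs_le.1 (hb z)]⟩
  set c : ℝ := ⨅ z, h z with hc
  set f : E → ℝ := fun z => h z - c with hfdef
  have hf0 : ∀ z, 0 ≤ f z := fun z => sub_nonneg.2 (ciInf_le hbb z)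
  have hf1 : ∀ z, f z ≤ 1 := by
    intro z
    have : h z - 1 ≤ c := le_ciInf fun y => by linarith [hosc z y]
    simp only [hfdef]; linarith
  have hfm : Measurable f := hm.sub measurable_const
  have hfb : ∀ z, |f z| ≤ 1 := fun z => abs_le.2 ⟨by linarith [hf0 z], hf1 z⟩
  have hint : ∀ (ν : Measure E) [IsFiniteMeasure ν], Integrable f ν :=
    fun ν _ => integrable_of_abs_le hfm.aestronglyMeasurable hfb
  have hred : ∀ (ν : Measure E), IsProbabilityMeasure ν → (∫ z, f z ∂ν) = (∫ z, h z ∂ν) - c := by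
    intro ν hν
    simp only [hfdef]
    rw [integral_sub (integrable_of_abs_le hm.aestronglyMeasurable hb) (integrable_const c)]
    simp
  rw [show (∫ z, h z ∂p) - ∫ z, h z ∂q = (∫ z, f z ∂p) - ∫ z, f z ∂q by
    rw [hred p inferInstance, hred q inferInstance]; ring]
  obtain ⟨i, hi, hpos, hneg⟩ :=
    (p.toSignedMeasure - q.toSignedMeasure).exists_compl_positive_negative
  have hle_i : ∀ ⦃j : Set E⦄, MeasurableSet j → j ⊆ i → (q j).toReal ≤ (p j).toReal := by
    intro j hj hji
    have h0 := (VectorMeasure.restrict_le_restrict_iff _ _ hi).1 hpos hj hji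
    rw [Measure.toSignedMeasure_sub_apply hj] at h0
    have : (0:ℝ) ≤ (p j).toReal - (q j).toReal := by simpa [Measure.real] using h0
    linarith
  have hle_ic : ∀ ⦃j : Set E⦄, MeasurableSet j → j ⊆ iᶜ → (p j).toReal ≤ (q j).toReal := by
    intro j hj hji
    have h0 := (VectorMeasure.restrict_le_restrict_iff _ _ hi.compl).1 hneg hj hji
    rw [Measure.toSignedMeasure_sub_apply hj] at h0
    have : (p j).toReal - (q j).toReal ≤ 0 := by simpa [Measure.real] using h0
    linarith
  have hqp : q.restrict i ≤ p.restrict i := by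
    refine Measure.le_iff.2 fun j hj => ?_
    rw [Measure.restrict_apply hj, Measure.restrict_apply hj]
    exact (ENNReal.toReal_le_toReal (measure_ne_top _ _) (measure_ne_top _ _)).1
      (hle_i (hj.inter hi) Set.inter_subset_right)
  have hpq : p.restrict iᶜ ≤ q.restrict iᶜ := by
    refine Measure.le_iff.2 fun j hj => ?_
    rw [Measure.restrict_apply hj, Measure.restrict_apply hj]
    exact (ENNReal.toReal_le_toReal (measure_ne_top _ _) (measure_ne_top _ _)).1
      (hle_ic (hj.inter hi.compl) Set.inter_subset_right)
  have h1 : (∫ z in iᶜ, f z ∂p) ≤ ∫ z in iᶜ, f z ∂q :=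
    integral_mono_measure hpq (ae_of_all _ hf0) (hint _)
  have hg1 : ∀ z, |1 - f z| ≤ 1 := fun z => abs_le.2 ⟨by linarith [hf1 z], by linarith [hf0 z]⟩
  have h2 : (∫ z in i, (1 - f z) ∂q) ≤ ∫ z in i, (1 - f z) ∂p :=
    integral_mono_measure hqp (ae_of_all _ fun z => by simpa using hf1 z)
      (integrable_of_abs_le ((measurable_const.sub hfm)).aestronglyMeasurable hg1)
  have hsplit : ∀ (ν : Measure E), IsProbabilityMeasure ν →
      (∫ z, f z ∂ν) = (∫ z in i, f z ∂ν) + ∫ z in iᶜ, f z ∂ν :=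
    fun ν hν => (integral_add_compl hi (hint ν)).symm
  have hIi : ∀ (ν : Measure E), IsProbabilityMeasure ν →
      (∫ z in i, f z ∂ν) = (ν i).toReal - ∫ z in i, (1 - f z) ∂ν := by
    intro ν hν
    have : ∫ z in i, (1 - f z) ∂ν = (∫ z in i, (1:ℝ) ∂ν) - ∫ z in i, f z ∂ν :=
      integral_sub (integrable_const 1) (hint _)
    rw [this]
    simp [Measure.restrict_apply_univ, Measure.real]
  rw [hsplit p inferInstance, hsplit q inferInstance, hIi p inferInstance, hIi q inferInstance]
  have := hβ i hi
  linarith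

lemma abs_integral_sub_le_tv {E : Type*} [MeasurableSpace E]
    (p q : Measure E) [IsProbabilityMeasure p] [IsProbabilityMeasure q]
    (h : E → ℝ) (hm : Measurable h) {C : ℝ} (hb : ∀ z, |h z| ≤ C)
    (hosc : ∀ x y, h x - h y ≤ 1)
    {β : ℝ} (hβ : ∀ A : Set E, MeasurableSet A → |(p A).toReal - (q A).toReal| ≤ β) :
    |(∫ z, h z ∂p) - ∫ z, h z ∂q| ≤ β := by
  refine abs_sub_le_iff.2 ⟨?_, ?_⟩
  · exact one_sided_tv p q h hm hb hosc fun A hA => (le_abs_self _).trans (hβ A hA)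
  · exact one_sided_tv q p h hm hb hosc fun A hA => by
      have := abs_le.1 (hβ A hA); linarith [this.1, this.2]

lemma fk_integral {E₁ E₂ : Type*} [MeasurableSpace E₁] [MeasurableSpace E₂]
    (G : E₁ → ℝ) (hGmeas : Measurable G) {i0 s0 : ℝ} (hi0 : 0 < i0)
    (hGi : ∀ x, i0 ≤ G x) (hGs : ∀ x, G x ≤ s0)
    (P : Kernel E₁ E₂) [IsMarkovKernel P]
    (ν : Measure E₁) [IsProbabilityMeasure ν]
    (h₂ : E₂ → ℝ) (hm : Measurable h₂) {C : ℝ} (hb : ∀ z, |h₂ z| ≤ C) :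
    ∫ z, h₂ z ∂(fkUpdate G P ν) = (∫ x, G x * ∫ z, h₂ z ∂(P x) ∂ν) / ∫ x, G x ∂ν := by
  have hGpos : ∀ x, 0 < G x := fun x => hi0.trans_le (hGi x)
  have hGabs : ∀ x, |G x| ≤ s0 := fun x => by rw [abs_of_pos (hGpos x)]; exact hGs x
  have hGint : Integrable G ν := integrable_of_abs_le hGmeas.aestronglyMeasurable hGabs
  set νG := ∫ x, G x ∂ν with hνG
  have hνGpos : 0 < νG := by
    have h1 : ∫ x, (fun _ => i0) x ∂ν ≤ ∫ x, G x ∂ν :=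
      integral_mono (integrable_const i0) hGint hGi
    simp only [integral_const, measure_univ, ENNReal.toReal_one, probReal_univ, smul_eq_mul, one_mul] at h1
    linarith
  set ν' := ν.withDensity fun x => ENNReal.ofReal (G x) with hν'
  have hc : (∫⁻ x, ENNReal.ofReal (G x) ∂ν) = ENNReal.ofReal νG :=
    (ofReal_integral_eq_lintegral_ofReal hGint
      (ae_of_all _ fun x => (hGpos x).le)).symm
  haveI hfin : IsFiniteMeasure ν' := by
    constructor
    rw [hν', withDensity_apply _ MeasurableSet.univ, Measure.restrict_univ, hc]
    exact ENNReal.ofReal_lt_top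
  have hbind_eq : ν'.bind (fun x => P x) = (ν' ⊗ₘ P).map Prod.snd := by
    ext A hA
    rw [Measure.bind_apply hA (Kernel.measurable P).aemeasurable, Measure.map_apply measurable_snd hA,
      Measure.compProd_apply (measurable_snd hA)]
    rfl
  set Ph₂ : E₁ → ℝ := fun x => ∫ z, h₂ z ∂(P x) with hPh₂
  have hPh₂sm : StronglyMeasurable Ph₂ := by
    have : StronglyMeasurable (Function.uncurry fun (_ : E₁) (y : E₂) => h₂ y) :=
      (hm.comp measurable_snd).stronglyMeasurable
    exact this.integral_kernel_prod_right (κ := P)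
  have hint2 : Integrable (fun p : E₁ × E₂ => h₂ p.2) (ν' ⊗ₘ P) :=
    integrable_of_abs_le (hm.comp measurable_snd).aestronglyMeasurable fun p => hb p.2
  have hmain : ∫ z, h₂ z ∂(ν'.bind fun x => P x) = ∫ x, Ph₂ x ∂ν' := by
    rw [hbind_eq, integral_map measurable_snd.aemeasurable hm.aestronglyMeasurable,
      Measure.integral_compProd hint2]
  have hwd : ∫ x, Ph₂ x ∂ν' = ∫ x, G x * Ph₂ x ∂ν := by
    have heq : (fun x => ENNReal.ofReal (G x)) = fun x => ((G x).toNNReal : ENNReal) := rfl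
    rw [hν', heq, integral_withDensity_eq_integral_smul hGmeas.real_toNNReal]
    congr 1
    ext x
    rw [NNReal.smul_def, smul_eq_mul, Real.coe_toNNReal _ (hGpos x).le]
  unfold fkUpdate
  rw [integral_smul_measure, hmain, hwd, hc]
  rw [ENNReal.toReal_inv, ENNReal.toReal_ofReal hνGpos.le]
  rw [smul_eq_mul, inv_mul_eq_div]

/-- Proposition 2: one-step error propagation through the Feynman-Kac
operator. -/
theorem fk_error_propagation
    {E₁ E₂ : Type*} [MeasurableSpace E₁] [MeasurableSpace E₂]
    (G : E₁ → ℝ) (hGmeas : Measurable G)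
    (hGbdd : BddAbove (Set.range G)) (hGpos : 0 < ⨅ x, G x)
    (P : ProbabilityTheory.Kernel E₁ E₂) [IsMarkovKernel P]
    (η μ : Measure E₁) [IsProbabilityMeasure η] [IsProbabilityMeasure μ]
    (h₂ : E₂ → ℝ) (hh₂meas : Measurable h₂)
    (hh₂bdd : ∃ C : ℝ, ∀ z, |h₂ z| ≤ C) (hh₂osc : osc h₂ ≤ 1) :
    ∃ h₁ : E₁ → ℝ, Measurable h₁ ∧ (∃ C : ℝ, ∀ x, |h₁ x| ≤ C) ∧ osc h₁ ≤ 1 ∧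
      |(∫ z, h₂ z ∂(fkUpdate G P η)) - ∫ z, h₂ z ∂(fkUpdate G P μ)| ≤
        dobrushin P * ((⨆ x, G x) / ∫ x, G x ∂η) *
          (2 - (⨅ x, G x) / ⨆ x, G x) *
          |(∫ x, h₁ x ∂η) - ∫ x, h₁ x ∂μ| := by
  classical
  -- basic setup
  haveI hE₁ : Nonempty E₁ := by
    by_contra hne
    rw [not_nonempty_iff] at hne
    rw [Real.iInf_of_isEmpty] at hGpos
    exact lt_irrefl 0 hGpos
  have x₀ : E₁ := Classical.arbitrary E₁
  have hbbG : BddBelow (Set.range G) := by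
    by_contra hnb
    rw [Real.iInf_of_not_bddBelow hnb] at hGpos
    exact lt_irrefl 0 hGpos
  set i : ℝ := ⨅ x, G x with hidef
  set s : ℝ := ⨆ x, G x with hsdef
  have hGi : ∀ x, i ≤ G x := fun x => ciInf_le hbbG x
  have hGs : ∀ x, G x ≤ s := fun x => le_ciSup hGbdd x
  have hGposx : ∀ x, 0 < G x := fun x => hGpos.trans_le (hGi x)
  have his : i ≤ s := (hGi x₀).trans (hGs x₀)
  have hspos : 0 < s := hGpos.trans_le his
  haveI hE₂ : Nonempty E₂ := by
    by_contra hne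
    rw [not_nonempty_iff] at hne
    have h0 := measure_univ (μ := P x₀)
    rw [Set.univ_eq_empty_iff.2 hne] at h0
    simp at h0
  obtain ⟨C, hC⟩ := hh₂bdd
  set C' : ℝ := max C 0 with hC'def
  have hC' : ∀ z, |h₂ z| ≤ C' := fun z => (hC z).trans (le_max_left _ _)
  have hC'0 : 0 ≤ C' := le_max_right _ _
  -- the Dobrushin coefficient bounds |P x A - P y A|
  haveI : Nonempty {A : Set E₂ // MeasurableSet A} := ⟨⟨∅, MeasurableSet.empty⟩⟩
  set β : ℝ := dobrushin P with hβdef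
  have htr : ∀ (x : E₁) (A : Set E₂), (P x A).toReal ≤ 1 := by
    intro x A
    have h := prob_le_one (μ := P x) (s := A)
    simpa using ENNReal.toReal_mono ENNReal.one_ne_top h
  have hA1 : ∀ (x y : E₁) (A : {A : Set E₂ // MeasurableSet A}),
      |(P x A.1).toReal - (P y A.1).toReal| ≤ 1 := by
    intro x y A
    have h1 := htr x A.1
    have h2 := htr y A.1
    have h3 := ENNReal.toReal_nonneg (a := P x A.1)
    have h4 := ENNReal.toReal_nonneg (a := P y A.1)
    rw [abs_sub_le_iff]
    constructor <;> linarith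
  have hβ : ∀ (x y : E₁) (A : Set E₂), MeasurableSet A →
      |(P x A).toReal - (P y A).toReal| ≤ β := by
    intro x y A hA
    have bdd1 : BddAbove (Set.range fun A' : {A : Set E₂ // MeasurableSet A} =>
        |(P x A'.1).toReal - (P y A'.1).toReal|) :=
      ⟨1, by rintro _ ⟨A', rfl⟩; exact hA1 x y A'⟩
    have i1 : |(P x A).toReal - (P y A).toReal| ≤
        ⨆ A' : {A : Set E₂ // MeasurableSet A}, |(P x A'.1).toReal - (P y A'.1).toReal| :=
      le_ciSup bdd1 ⟨A, hA⟩
    have bdd2 : BddAbove (Set.range fun y' : E₁ =>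
        ⨆ A' : {A : Set E₂ // MeasurableSet A}, |(P x A'.1).toReal - (P y' A'.1).toReal|) :=
      ⟨1, by rintro _ ⟨y', rfl⟩; exact ciSup_le fun A' => hA1 x y' A'⟩
    have i2 : (⨆ A' : {A : Set E₂ // MeasurableSet A},
          |(P x A'.1).toReal - (P y A'.1).toReal|) ≤
        ⨆ y' : E₁, ⨆ A' : {A : Set E₂ // MeasurableSet A},
          |(P x A'.1).toReal - (P y' A'.1).toReal| :=
      le_ciSup bdd2 y
    have bdd3 : BddAbove (Set.range fun x' : E₁ =>
        ⨆ y' : E₁, ⨆ A' : {A : Set E₂ // MeasurableSet A},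
          |(P x' A'.1).toReal - (P y' A'.1).toReal|) :=
      ⟨1, by
        rintro _ ⟨x', rfl⟩
        exact ciSup_le fun y' => ciSup_le fun A' => hA1 x' y' A'⟩
    have i3 : (⨆ y' : E₁, ⨆ A' : {A : Set E₂ // MeasurableSet A},
          |(P x A'.1).toReal - (P y' A'.1).toReal|) ≤ β :=
      le_ciSup bdd3 x
    exact i1.trans (i2.trans i3)
  have hβ0 : 0 ≤ β := (abs_nonneg _).trans (hβ x₀ x₀ ∅ MeasurableSet.empty)
  -- properties of Ph₂
  set Ph₂ : E₁ → ℝ := fun x => ∫ z, h₂ z ∂(P x) with hPh₂def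
  have hPh₂sm : StronglyMeasurable Ph₂ := by
    have : StronglyMeasurable (Function.uncurry fun (_ : E₁) (y : E₂) => h₂ y) :=
      (hh₂meas.comp measurable_snd).stronglyMeasurable
    exact this.integral_kernel_prod_right (κ := P)
  have hPh₂m : Measurable Ph₂ := hPh₂sm.measurable
  have hPh₂b : ∀ x, |Ph₂ x| ≤ C' := by
    intro x
    have h1 : ‖∫ z, h₂ z ∂(P x)‖ ≤ ∫ z, ‖h₂ z‖ ∂(P x) := norm_integral_le_integral_norm _
    have h2 : (∫ z, ‖h₂ z‖ ∂(P x)) ≤ ∫ z, (fun _ => C') z ∂(P x) := by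
      refine integral_mono ?_ (integrable_const C') fun z => ?_
      · exact integrable_of_abs_le hh₂meas.norm.aestronglyMeasurable
          (fun z => by rw [Real.norm_eq_abs, abs_abs]; exact hC' z)
      · simpa [Real.norm_eq_abs] using hC' z
    simp only [integral_const, measure_univ, ENNReal.toReal_one, probReal_univ, smul_eq_mul, one_mul] at h2
    rw [← Real.norm_eq_abs]
    exact h1.trans h2
  have hosc1 : ∀ a b : E₂, h₂ a - h₂ b ≤ 1 := by
    intro a b
    have hbdd : BddAbove (Set.range fun q : E₂ × E₂ => |h₂ q.1 - h₂ q.2|) := by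
      refine ⟨2 * C', ?_⟩
      rintro _ ⟨q, rfl⟩
      calc |h₂ q.1 - h₂ q.2| ≤ |h₂ q.1| + |h₂ q.2| := abs_sub _ _
        _ ≤ 2 * C' := by linarith [hC' q.1, hC' q.2]
    have h1 : |h₂ a - h₂ b| ≤ osc h₂ := le_ciSup hbdd (a, b)
    have h2 := abs_le.1 h1
    linarith [h2.2]
  have hPh₂osc : ∀ x y, |Ph₂ x - Ph₂ y| ≤ β := fun x y =>
    abs_integral_sub_le_tv (P x) (P y) h₂ hh₂meas hC' hosc1 (fun A hA => hβ x y A hA)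
  -- integrals of G
  have hGabs : ∀ x, |G x| ≤ s := fun x => by rw [abs_of_pos (hGposx x)]; exact hGs x
  have hGint : ∀ (ν : Measure E₁) [IsProbabilityMeasure ν], Integrable G ν :=
    fun ν _ => integrable_of_abs_le hGmeas.aestronglyMeasurable hGabs
  have hνGpos : ∀ (ν : Measure E₁) [IsProbabilityMeasure ν], 0 < ∫ x, G x ∂ν := by
    intro ν _
    have h1 : ∫ x, (fun _ => i) x ∂ν ≤ ∫ x, G x ∂ν :=
      integral_mono (integrable_const i) (hGint ν) hGi
    simp only [integral_const, measure_univ, ENNReal.toReal_one, probReal_univ, smul_eq_mul, one_mul] at h1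
    linarith
  set ηG := ∫ x, G x ∂η with hηGdef
  set μG := ∫ x, G x ∂μ with hμGdef
  have hηG : 0 < ηG := hνGpos η
  have hμG : 0 < μG := hνGpos μ
  -- f = G * Ph₂
  set f : E₁ → ℝ := fun x => G x * Ph₂ x with hfdef
  have hfm : Measurable f := hGmeas.mul hPh₂m
  have hfb : ∀ x, |f x| ≤ s * C' := by
    intro x
    rw [hfdef, abs_mul]
    exact mul_le_mul (hGabs x) (hPh₂b x) (abs_nonneg _) hspos.le
  have hfint : ∀ (ν : Measure E₁) [IsProbabilityMeasure ν], Integrable f ν :=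
    fun ν _ => integrable_of_abs_le hfm.aestronglyMeasurable hfb
  set a : ℝ := ∫ x, f x ∂η with hadef
  set b : ℝ := ∫ x, f x ∂μ with hbdef
  -- the two Feynman-Kac integrals
  have hfkη : ∫ z, h₂ z ∂(fkUpdate G P η) = a / ηG :=
    fk_integral G hGmeas hGpos hGi hGs P η h₂ hh₂meas hC'
  have hfkμ : ∫ z, h₂ z ∂(fkUpdate G P μ) = b / μG :=
    fk_integral G hGmeas hGpos hGi hGs P μ h₂ hh₂meas hC'
  set Φμ : ℝ := b / μG with hΦμdef
  -- |Ph₂ x - Φμ| ≤ β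
  have hkb : ∀ x, |Ph₂ x - Φμ| ≤ β := by
    intro x
    have hGc : Integrable (fun y => G y * Ph₂ x) μ :=
      integrable_of_abs_le (hGmeas.mul measurable_const).aestronglyMeasurable
        (C := s * |Ph₂ x|)
        (fun y => by rw [abs_mul]; exact mul_le_mul_of_nonneg_right (hGabs y) (abs_nonneg _))
    have key : Ph₂ x * μG - b = ∫ y, G y * (Ph₂ x - Ph₂ y) ∂μ := by
      have e1 : ∀ y, G y * (Ph₂ x - Ph₂ y) = G y * Ph₂ x - f y := fun y => by
        rw [hfdef]; ring
      rw [integral_congr_ae (ae_of_all _ e1), integral_sub hGc (hfint μ),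
        integral_mul_const]
      rw [hbdef, hμGdef]; ring
    have habs : |∫ y, G y * (Ph₂ x - Ph₂ y) ∂μ| ≤ β * μG := by
      have h1 : ‖∫ y, G y * (Ph₂ x - Ph₂ y) ∂μ‖ ≤ ∫ y, ‖G y * (Ph₂ x - Ph₂ y)‖ ∂μ :=
        norm_integral_le_integral_norm _
      have h2 : (∫ y, ‖G y * (Ph₂ x - Ph₂ y)‖ ∂μ) ≤ ∫ y, G y * β ∂μ := by
        refine integral_mono ?_ ?_ fun y => ?_
        · exact integrable_of_abs_le (hGmeas.mul
            (measurable_const.sub hPh₂m)).norm.aestronglyMeasurable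
            (C := s * (2 * C'))
            (fun y => by
              rw [Real.norm_eq_abs, abs_abs, abs_mul]
              refine mul_le_mul (hGabs y) ?_ (abs_nonneg _) hspos.le
              calc |Ph₂ x - Ph₂ y| ≤ |Ph₂ x| + |Ph₂ y| := abs_sub _ _
                _ ≤ 2 * C' := by linarith [hPh₂b x, hPh₂b y])
        · exact (hGint μ).mul_const β
        · rw [Real.norm_eq_abs, abs_mul, abs_of_pos (hGposx y)]
          exact mul_le_mul_of_nonneg_left (hPh₂osc x y) (hGposx y).le
      have h3 : (∫ y, G y * β ∂μ) = μG * β := by rw [integral_mul_const, hμGdef]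
      rw [Real.norm_eq_abs] at h1
      rw [h3] at h2
      linarith [h1.trans h2]
    have hsplit : Ph₂ x - Φμ = (Ph₂ x * μG - b) / μG := by
      rw [hΦμdef]; field_simp
    rw [hsplit, abs_div, abs_of_pos hμG, key]
    rw [div_le_iff₀ hμG]
    exact habs
  -- case split on β = 0
  rcases eq_or_lt_of_le hβ0 with hβz | hβpos
  · -- degenerate case: β = 0, Ph₂ is constant
    refine ⟨fun _ => 0, measurable_const, ⟨0, fun x => by simp⟩, ?_, ?_⟩
    · have : osc (fun _ : E₁ => (0:ℝ)) = ⨆ _ : E₁ × E₁, (0:ℝ) := by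
        unfold osc; congr 1; ext q; simp
      rw [this, ciSup_const]; norm_num
    · have hconst : ∀ x, Ph₂ x = Ph₂ x₀ := by
        intro x
        have := hPh₂osc x x₀
        rw [← hβz] at this
        have := abs_le.1 this
        linarith [this.1, this.2]
      have hfν : ∀ (ν : Measure E₁) [IsProbabilityMeasure ν],
          (∫ x, f x ∂ν) = (∫ x, G x ∂ν) * Ph₂ x₀ := by
        intro ν _
        rw [show (∫ x, f x ∂ν) = ∫ x, G x * Ph₂ x₀ ∂ν from
          integral_congr_ae (ae_of_all _ fun x => by
            show G x * Ph₂ x = G x * Ph₂ x₀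
            rw [hconst x]),
          integral_mul_const]
      have ha : a = ηG * Ph₂ x₀ := hfν η
      have hb' : b = μG * Ph₂ x₀ := hfν μ
      rw [hfkη, hfkμ]
      have hL : a / ηG - Φμ = 0 := by
        rw [ha, hΦμdef, hb']
        field_simp; ring
      rw [hL, abs_zero]
      simp
  · -- main case: β > 0
    set c₀ : ℝ := β * (2 * s - i) with hc₀def
    have h2si : 0 < 2 * s - i := by linarith
    have hc₀pos : 0 < c₀ := mul_pos hβpos h2si
    set g : E₁ → ℝ := fun x => G x * (Ph₂ x - Φμ) with hgdef
    have hgm : Measurable g := hGmeas.mul (hPh₂m.sub measurable_const)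
    have hgb : ∀ x, |g x| ≤ s * β := by
      intro x
      rw [hgdef, abs_mul]
      exact mul_le_mul (hGabs x) (hkb x) (abs_nonneg _) hspos.le
    set h₁ : E₁ → ℝ := fun x => g x / c₀ with hh₁def
    have hh₁m : Measurable h₁ := hgm.div_const c₀
    have hh₁b : ∀ x, |h₁ x| ≤ s * β / c₀ := by
      intro x
      rw [hh₁def, abs_div, abs_of_pos hc₀pos]
      exact div_le_div_of_nonneg_right (hgb x) hc₀pos.le
    -- oscillation bound for g
    have hgosc : ∀ x y, |g x - g y| ≤ c₀ := by
      intro x y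
      have e : g x - g y = G x * (Ph₂ x - Ph₂ y) + (G x - G y) * (Ph₂ y - Φμ) := by
        rw [hgdef]; ring
      have hGxy : |G x - G y| ≤ s - i := by
        rw [abs_sub_le_iff]
        constructor <;> linarith [hGi x, hGi y, hGs x, hGs y]
      calc |g x - g y| ≤ |G x * (Ph₂ x - Ph₂ y)| + |(G x - G y) * (Ph₂ y - Φμ)| := by
            rw [e]; exact abs_add_le _ _
        _ ≤ s * β + (s - i) * β := by
            rw [abs_mul, abs_mul]
            exact add_le_add (mul_le_mul (hGabs x) (hPh₂osc x y) (abs_nonneg _) hspos.le)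
              (mul_le_mul hGxy (hkb y) (abs_nonneg _) (by linarith))
        _ = c₀ := by rw [hc₀def]; ring
    have hh₁osc : osc h₁ ≤ 1 := by
      refine ciSup_le fun q => ?_
      rw [hh₁def]
      rw [div_sub_div_same, abs_div, abs_of_pos hc₀pos, div_le_one hc₀pos]
      exact hgosc q.1 q.2
    refine ⟨h₁, hh₁m, ⟨s * β / c₀, hh₁b⟩, hh₁osc, ?_⟩
    -- integrals of g and h₁
    have hgint : ∀ (ν : Measure E₁) [IsProbabilityMeasure ν],
        (∫ x, g x ∂ν) = (∫ x, f x ∂ν) - Φμ * ∫ x, G x ∂ν := by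
      intro ν _
      have e1 : ∀ x, g x = f x - Φμ * G x := fun x => by rw [hgdef, hfdef]; ring
      rw [integral_congr_ae (ae_of_all _ e1),
        integral_sub (hfint ν) ((hGint ν).const_mul Φμ), integral_const_mul]
    have hgη : (∫ x, g x ∂η) = a - Φμ * ηG := hgint η
    have hgμ : (∫ x, g x ∂μ) = 0 := by
      rw [hgint μ, ← hbdef, ← hμGdef, hΦμdef]
      field_simp; ring
    have hh₁ν : ∀ (ν : Measure E₁) [IsProbabilityMeasure ν],
        (∫ x, h₁ x ∂ν) = (∫ x, g x ∂ν) / c₀ := by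
      intro ν _
      rw [hh₁def, integral_div]
    rw [hfkη, hfkμ, hh₁ν η, hh₁ν μ, hgη, hgμ]
    -- now it is pure algebra
    have key : a / ηG - b / μG = (a - Φμ * ηG) / ηG := by
      rw [hΦμdef]; field_simp
    rw [key, abs_div, abs_of_pos hηG]
    rw [zero_div, sub_zero, abs_div, abs_of_pos hc₀pos]
    rw [hβdef] at hc₀def ⊢
    have heq : dobrushin P * (s / ηG) * (2 - i / s) * (|a - Φμ * ηG| / c₀) =
        |a - Φμ * ηG| / ηG := by
      rw [hc₀def]
      have hne : dobrushin P * s * 2 - dobrushin P * i ≠ 0 := by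
        rw [← hβdef]; nlinarith
      field_simp
      linear_combination |a - ηG * Φμ| * mul_inv_cancel₀ hne
    rw [heq]
end

section
/- Let Z be a nonnegative real-valued random variable on a probability space, let K > 0, and suppose that for every integer n ≥ 1, Z^n is integrable with E[Z^n] ≤ c(n) K^n. Then for every τ ≥ 0, exp(τZ) is integrable and E[ exp(τ Z) ] ≤ (1 + √(2π) τ K) · e^{τ² K² / 8}. -/
set_option maxHeartbeats 2000000


open MeasureTheory Real

open Set in
/-- The moment constant as a Gaussian-type integral. -/
lemma cConst_eq_integral {K : ℝ} (hK : 0 < K) (k : ℕ) :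
    cConst ((k+2 : ℕ) : ℝ) * K ^ (k+2)
      = (2 * ((k:ℝ)+2)) * ∫ t in Ioi (0:ℝ), t ^ (k+1) * Real.exp (-(2/K^2) * t^2) := by
  have hb : (0:ℝ) < 2/K^2 := by positivity
  have h := integral_rpow_mul_exp_neg_mul_rpow (p := 2) (q := (k:ℝ)+1) two_pos
    (lt_of_lt_of_le neg_one_lt_zero (by positivity)) hb
  have hint : ∫ x in Ioi (0:ℝ), x ^ ((k:ℝ)+1) * Real.exp (-(2/K^2) * x ^ (2:ℝ))
      = ∫ t in Ioi (0:ℝ), t ^ (k+1) * Real.exp (-(2/K^2) * t^2) := by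
    refine setIntegral_congr_fun measurableSet_Ioi (fun x hx => ?_)
    rw [show ((k:ℝ)+1) = ((k+1 : ℕ) : ℝ) by push_cast; ring, Real.rpow_natCast,
      Real.rpow_two]
  rw [hint] at h
  rw [h]
  have hm : ((k:ℝ)+1+1) = ((k+2 : ℕ) : ℝ) := by push_cast; ring
  rw [hm]
  set m : ℝ := ((k+2 : ℕ) : ℝ) with hmdef
  have hm2 : (2:ℝ) ≤ m := by rw [hmdef]; exact_mod_cast Nat.le_add_left 2 k
  have hcc : cConst m = 2 ^ (-m / 2) * m * Real.Gamma (m / 2) := by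
    rw [cConst, if_neg (by linarith)]
  have hpow : ((2:ℝ)/K^2) ^ (-m/2) = 2 ^ (-m/2) * K ^ (k+2) := by
    rw [Real.div_rpow (by norm_num) (by positivity)]
    rw [← Real.rpow_natCast K 2, ← Real.rpow_mul hK.le]
    rw [show ((2:ℕ):ℝ) * (-m/2) = -m by push_cast; ring, Real.rpow_neg hK.le,
      div_inv_eq_mul]
    rw [hmdef, Real.rpow_natCast]
  rw [hcc, hpow]
  have : (2 * m) = 2 * ((k:ℝ)+2) := by rw [hmdef]; push_cast; ring
  rw [← this]
  ring

open Set in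
/-- Moments-to-MGF estimate from the proof of Theorem 5: if
`E[Zⁿ] ≤ c(n) Kⁿ` for all `n ≥ 1`, then
`E[e^{τZ}] ≤ (1 + √(2π) τ K) e^{τ²K²/8}`. -/
theorem mgf_from_moment_bounds
    {Ω : Type*} [MeasurableSpace Ω] (μ : Measure Ω) [IsProbabilityMeasure μ]
    (Z : Ω → ℝ) (hZmeas : Measurable Z) (hZnonneg : ∀ ω, 0 ≤ Z ω)
    (K : ℝ) (hK : 0 < K)
    (hmom : ∀ n : ℕ, 1 ≤ n →
      Integrable (fun ω => Z ω ^ n) μ ∧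
        (∫ ω, Z ω ^ n ∂μ) ≤ cConst n * K ^ n)
    (τ : ℝ) (hτ : 0 ≤ τ) :
    Integrable (fun ω => Real.exp (τ * Z ω)) μ ∧
      (∫ ω, Real.exp (τ * Z ω) ∂μ) ≤
        (1 + Real.sqrt (2 * Real.pi) * τ * K) *
          Real.exp (τ ^ 2 * K ^ 2 / 8) := by
  have hπ2 : (1:ℝ) ≤ Real.sqrt (π/2) := by
    rw [show (1:ℝ) = Real.sqrt 1 by simp]
    exact Real.sqrt_le_sqrt (by linarith [Real.pi_gt_three])
  have hb : (0:ℝ) < 2/K^2 := by positivity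
  set b : ℝ := 2/K^2 with hbdef
  set x8 : ℝ := τ ^ 2 * K ^ 2 / 8 with hx8def
  set c0 : ℝ := τ * K^2 / 4 with hc0def
  set B : ℝ := (1 + Real.sqrt (2 * π) * τ * K) * Real.exp x8 with hBdef
  have hB0 : (0:ℝ) ≤ B := by
    have : 0 ≤ Real.sqrt (2*π) * τ * K :=
      mul_nonneg (mul_nonneg (Real.sqrt_nonneg _) hτ) hK.le
    have := Real.exp_pos x8
    nlinarith
  -- series expansion of exp
  have hexp : ∀ y : ℝ, Real.exp y = ∑' n : ℕ, y ^ n / (Nat.factorial n) := fun y => by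
    rw [Real.exp_eq_exp_ℝ, NormedSpace.exp_eq_tsum_div]
  have hsum1 : ∀ y : ℝ, Summable (fun k : ℕ => y ^ (k+1) / (Nat.factorial (k+1))) :=
    fun y => (summable_nat_add_iff 1).mpr (Real.summable_pow_div_factorial y)
  have hexpsub : ∀ y : ℝ, ∑' k : ℕ, y ^ (k+1) / (Nat.factorial (k+1)) = Real.exp y - 1 := by
    intro y
    have h0 : Real.exp y
        = y ^ 0 / (Nat.factorial 0) + ∑' k : ℕ, y ^ (k+1) / (Nat.factorial (k+1)) := by
      rw [hexp y]; exact (Real.summable_pow_div_factorial y).tsum_eq_zero_add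
    simp at h0
    linarith
  -- pointwise series in ENNReal
  have hτZ : ∀ ω, 0 ≤ τ * Z ω := fun ω => mul_nonneg hτ (hZnonneg ω)
  have hpt : ∀ ω, ENNReal.ofReal (Real.exp (τ * Z ω))
      = ∑' n : ℕ, ENNReal.ofReal ((τ * Z ω) ^ n / (Nat.factorial n)) := by
    intro ω
    rw [hexp (τ * Z ω)]
    exact ENNReal.ofReal_tsum_of_nonneg
      (fun n => div_nonneg (pow_nonneg (hτZ ω) n) (by positivity))
      (Real.summable_pow_div_factorial _)
  have hswap : ∫⁻ ω, ENNReal.ofReal (Real.exp (τ * Z ω)) ∂μ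
      = ∑' n : ℕ, ∫⁻ ω, ENNReal.ofReal ((τ * Z ω) ^ n / (Nat.factorial n)) ∂μ := by
    simp_rw [hpt]
    exact lintegral_tsum (fun n =>
      ((((hZmeas.const_mul τ).pow_const n).div_const _).ennreal_ofReal).aemeasurable)
  -- bound on each term, n ≥ 1
  have hterm : ∀ n : ℕ, 1 ≤ n →
      ∫⁻ ω, ENNReal.ofReal ((τ * Z ω) ^ n / (Nat.factorial n)) ∂μ
        ≤ ENNReal.ofReal (τ ^ n / (Nat.factorial n) * (cConst n * K ^ n)) := by
    intro n hn
    have hco : (0:ℝ) ≤ τ ^ n / (Nat.factorial n) := by positivity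
    have hrw : ∀ ω, ((τ * Z ω) ^ n / (Nat.factorial n) : ℝ)
        = (τ ^ n / (Nat.factorial n)) * Z ω ^ n := fun ω => by rw [mul_pow]; ring
    simp_rw [hrw, ENNReal.ofReal_mul hco]
    rw [lintegral_const_mul _ ((hZmeas.pow_const n).ennreal_ofReal)]
    rw [← ofReal_integral_eq_lintegral_ofReal (hmom n hn).1
      (Filter.Eventually.of_forall fun ω => pow_nonneg (hZnonneg ω) n)]
    exact mul_le_mul_right (ENNReal.ofReal_le_ofReal (hmom n hn).2) _
  -- Gaussian integrals
  have hf1eq : ∀ t : ℝ, Real.exp (τ*t) * Real.exp (-b*t^2)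
      = Real.exp x8 * Real.exp (-b*(t - c0)^2) := by
    intro t
    rw [← Real.exp_add, ← Real.exp_add]
    congr 1
    rw [hbdef, hx8def, hc0def]
    field_simp
    ring
  have hf1 : IntegrableOn (fun t : ℝ => Real.exp (τ*t) * Real.exp (-b*t^2)) (Ioi 0) :=
    ((((integrable_exp_neg_mul_sq hb).comp_sub_right c0).const_mul
      (Real.exp x8)).integrableOn).congr_fun (fun t _ => (hf1eq t).symm) measurableSet_Ioi
  have hf0 : IntegrableOn (fun t : ℝ => Real.exp (-b*t^2)) (Ioi 0) :=
    (integrable_exp_neg_mul_sq hb).integrableOn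
  set I1 : ℝ := ∫ t in Ioi (0:ℝ), Real.exp (τ*t) * Real.exp (-b*t^2) with hI1def
  set I0 : ℝ := ∫ t in Ioi (0:ℝ), Real.exp (-b*t^2) with hI0def
  have hGr : Real.sqrt (π/b) = K * Real.sqrt (π/2) := by
    rw [show π/b = K^2*(π/2) by rw [hbdef]; field_simp,
      Real.sqrt_mul (by positivity), Real.sqrt_sq hK.le]
  have hI0val : I0 = K * Real.sqrt (π/2) / 2 := by
    rw [hI0def, integral_gaussian_Ioi, hGr]
  have hI1le : I1 ≤ Real.exp x8 * (K * Real.sqrt (π/2)) := by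
    rw [hI1def]
    calc ∫ t in Ioi (0:ℝ), Real.exp (τ*t) * Real.exp (-b*t^2)
        = ∫ t in Ioi (0:ℝ), Real.exp x8 * Real.exp (-b*(t - c0)^2) :=
          setIntegral_congr_fun measurableSet_Ioi (fun t _ => hf1eq t)
      _ = Real.exp x8 * ∫ t in Ioi (0:ℝ), Real.exp (-b*(t - c0)^2) := by
          rw [integral_const_mul]
      _ ≤ Real.exp x8 * Real.sqrt (π/b) := by
          gcongr
          calc ∫ t in Ioi (0:ℝ), Real.exp (-b*(t - c0)^2)
              ≤ ∫ t : ℝ, Real.exp (-b*(t - c0)^2) :=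
                setIntegral_le_integral ((integrable_exp_neg_mul_sq hb).comp_sub_right c0)
                  (Filter.Eventually.of_forall fun t => (Real.exp_pos _).le)
            _ = ∫ t : ℝ, Real.exp (-b*t^2) := by
                rw [integral_sub_right_eq_self (fun t => Real.exp (-b*t^2)) c0]
            _ ≤ Real.sqrt (π / b) := by rw [integral_gaussian]
      _ = Real.exp x8 * (K * Real.sqrt (π/2)) := by rw [hGr]
  have hI01 : I0 ≤ I1 := by
    rw [hI0def, hI1def]
    refine setIntegral_mono_on hf0 hf1 measurableSet_Ioi (fun t ht => ?_)
    have h1 : (1:ℝ) ≤ Real.exp (τ*t) := Real.one_le_exp (mul_nonneg hτ (le_of_lt ht))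
    exact le_mul_of_one_le_left (Real.exp_pos _).le h1
  -- the tail sum as an integral
  have hJint : ∀ k : ℕ, IntegrableOn (fun t : ℝ => t ^ (k+1) * Real.exp (-b * t^2)) (Ioi 0) := by
    intro k
    have h := integrableOn_rpow_mul_exp_neg_mul_sq hb (s := (k:ℝ)+1)
      (lt_of_lt_of_le neg_one_lt_zero (by positivity))
    refine h.congr_fun (fun x hx => ?_) measurableSet_Ioi
    beta_reduce; rw [show ((k:ℝ)+1) = ((k+1 : ℕ) : ℝ) by push_cast; ring, Real.rpow_natCast]
  have hmeas_t : ∀ k : ℕ, Measurable (fun t : ℝ => t ^ (k+1) * Real.exp (-b * t^2)) :=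
    fun k => (measurable_id.pow_const (k+1)).mul
      ((measurable_id.pow_const 2).const_mul (-b)).exp
  set g : ℝ → ℝ := fun t => 2*τ*(Real.exp (τ*t) - 1) * Real.exp (-b*t^2) with hgdef
  have hg_int : IntegrableOn g (Ioi 0) := by
    have hbase : IntegrableOn
        (fun t : ℝ => (2*τ) * (Real.exp (τ*t) * Real.exp (-b*t^2) - Real.exp (-b*t^2)))
        (Ioi 0) := (hf1.sub hf0).const_mul (2*τ)
    refine hbase.congr_fun (fun t _ => ?_) measurableSet_Ioi
    simp only [hgdef]; ring
  have hg_nonneg : 0 ≤ᵐ[volume.restrict (Ioi 0)] g := by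
    refine (ae_restrict_iff' measurableSet_Ioi).mpr (Filter.Eventually.of_forall fun t ht => ?_)
    have h1 : (1:ℝ) ≤ Real.exp (τ*t) := Real.one_le_exp (mul_nonneg hτ (le_of_lt ht))
    have h2 : (0:ℝ) < Real.exp (-b*t^2) := Real.exp_pos _
    simp only [Pi.zero_apply, hgdef]
    exact mul_nonneg (mul_nonneg (mul_nonneg (by norm_num : (0:ℝ) ≤ 2) hτ)
      (sub_nonneg.mpr h1)) h2.le
  have htail : ∑' k : ℕ, ENNReal.ofReal
      (τ ^ (k+2) / (Nat.factorial (k+2)) * (cConst ((k+2 : ℕ) : ℝ) * K ^ (k+2)))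
      = ENNReal.ofReal (∫ t in Ioi (0:ℝ), g t) := by
    have ha : ∀ k : ℕ, τ ^ (k+2) / (Nat.factorial (k+2)) * (cConst ((k+2 : ℕ) : ℝ) * K ^ (k+2))
        = (2 * τ ^ (k+2) / (Nat.factorial (k+1)))
            * ∫ t in Ioi (0:ℝ), t ^ (k+1) * Real.exp (-b * t^2) := by
      intro k
      rw [cConst_eq_integral hK k, show (2:ℝ)/K^2 = b from hbdef.symm,
        show (Nat.factorial (k+2) : ℝ) = ((k:ℝ)+2) * (Nat.factorial (k+1)) by
          rw [show k+2 = (k+1)+1 from rfl, Nat.factorial_succ]; push_cast; ring]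
      generalize (∫ t in Ioi (0:ℝ), t ^ (k+1) * Real.exp (-b * t^2)) = J
      have hk2 : ((k:ℝ)+2) ≠ 0 := by positivity
      have hfac : ((Nat.factorial (k+1) : ℝ)) ≠ 0 := by positivity
      field_simp
    have hd0 : ∀ k : ℕ, (0:ℝ) ≤ 2 * τ ^ (k+2) / (Nat.factorial (k+1)) := fun k => by positivity
    calc ∑' k : ℕ, ENNReal.ofReal
          (τ ^ (k+2) / (Nat.factorial (k+2)) * (cConst ((k+2 : ℕ) : ℝ) * K ^ (k+2)))
        = ∑' k : ℕ, ∫⁻ t in Ioi (0:ℝ), ENNReal.ofReal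
            ((2 * τ ^ (k+2) / (Nat.factorial (k+1))) * (t ^ (k+1) * Real.exp (-b * t^2))) := by
          refine tsum_congr (fun k => ?_)
          rw [ha k, ENNReal.ofReal_mul (hd0 k),
            ofReal_integral_eq_lintegral_ofReal (hJint k)
              ((ae_restrict_iff' measurableSet_Ioi).mpr (Filter.Eventually.of_forall
                fun t ht => mul_nonneg (pow_nonneg (le_of_lt ht) _) (Real.exp_pos _).le)),
            ← lintegral_const_mul _ ((hmeas_t k).ennreal_ofReal)]
          simp_rw [← ENNReal.ofReal_mul (hd0 k)]
      _ = ∫⁻ t in Ioi (0:ℝ), ∑' k : ℕ, ENNReal.ofReal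
            ((2 * τ ^ (k+2) / (Nat.factorial (k+1))) * (t ^ (k+1) * Real.exp (-b * t^2))) :=
          (lintegral_tsum (fun k => (((hmeas_t k).const_mul _).ennreal_ofReal).aemeasurable)).symm
      _ = ∫⁻ t in Ioi (0:ℝ), ENNReal.ofReal (g t) := by
          refine lintegral_congr_ae ((ae_restrict_iff' measurableSet_Ioi).mpr
            (Filter.Eventually.of_forall fun t ht => ?_))
          have hterm_eq : ∀ k : ℕ,
              (2 * τ ^ (k+2) / (Nat.factorial (k+1))) * (t ^ (k+1) * Real.exp (-b * t^2))
              = (2 * τ * Real.exp (-b*t^2)) * ((τ*t) ^ (k+1) / (Nat.factorial (k+1))) := by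
            intro k
            have hfac : ((Nat.factorial (k+1) : ℝ)) ≠ 0 := by positivity
            rw [mul_pow]
            field_simp
            ring
          simp_rw [hterm_eq]
          rw [← ENNReal.ofReal_tsum_of_nonneg
            (fun k => mul_nonneg (by positivity)
              (div_nonneg (pow_nonneg (mul_nonneg hτ (le_of_lt ht)) _) (by positivity)))
            ((hsum1 (τ*t)).mul_left _)]
          rw [tsum_mul_left, hexpsub (τ*t), hgdef]
          congr 1
          ring
      _ = ENNReal.ofReal (∫ t in Ioi (0:ℝ), g t) :=
          (ofReal_integral_eq_lintegral_ofReal hg_int hg_nonneg).symm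
  -- real-valued final bound
  have hgval : ∫ t in Ioi (0:ℝ), g t = 2*τ*(I1 - I0) := by
    rw [show g = fun t => (2*τ) * ((Real.exp (τ*t) * Real.exp (-b*t^2)) - Real.exp (-b*t^2))
        from funext fun t => by rw [hgdef]; ring]
    rw [integral_const_mul, integral_sub hf1 hf0, hI1def, hI0def]
  have hreal : 1 + τ*K + 2*τ*(I1 - I0) ≤ B := by
    have hs : (0:ℝ) ≤ Real.sqrt (π/2) := by positivity
    have h2π : Real.sqrt (2*π) = 2*Real.sqrt (π/2) := by
      rw [show (2:ℝ)*π = 2^2*(π/2) by ring, Real.sqrt_mul (by norm_num),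
        Real.sqrt_sq (by norm_num)]
    have hex : (1:ℝ) ≤ Real.exp x8 := Real.one_le_exp (by positivity)
    have hτK : (0:ℝ) ≤ τ*K := mul_nonneg hτ hK.le
    rw [hBdef, h2π, hI0val]
    nlinarith [mul_le_mul_of_nonneg_left hI1le (mul_nonneg (by norm_num : (0:ℝ) ≤ 2) hτ),
      mul_nonneg hτK (sub_nonneg.mpr hπ2), mul_nonneg hτK (sub_nonneg.mpr hex),
      mul_nonneg (mul_nonneg hτK hs) (sub_nonneg.mpr hex)]
  -- assemble the lintegral bound
  have key : ∫⁻ ω, ENNReal.ofReal (Real.exp (τ * Z ω)) ∂μ ≤ ENNReal.ofReal B := by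
    have hsplit : ∀ F : ℕ → ENNReal, ∑' n, F n = F 0 + F 1 + ∑' k, F (k+2) := by
      intro F
      rw [tsum_eq_zero_add' ENNReal.summable, tsum_eq_zero_add' ENNReal.summable, ← add_assoc]
    rw [hswap, hsplit]
    have hF0 : ∫⁻ ω, ENNReal.ofReal ((τ * Z ω) ^ 0 / (Nat.factorial 0)) ∂μ = 1 := by
      simp
    have hF1 : ∫⁻ ω, ENNReal.ofReal ((τ * Z ω) ^ 1 / (Nat.factorial 1)) ∂μ
        ≤ ENNReal.ofReal (τ * K) := by
      refine (hterm 1 le_rfl).trans (le_of_eq ?_)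
      congr 1
      simp [cConst]
    have hFtail : ∑' k : ℕ, ∫⁻ ω, ENNReal.ofReal ((τ * Z ω) ^ (k+2) / (Nat.factorial (k+2))) ∂μ
        ≤ ENNReal.ofReal (2*τ*(I1 - I0)) := by
      calc ∑' k : ℕ, ∫⁻ ω, ENNReal.ofReal ((τ * Z ω) ^ (k+2) / (Nat.factorial (k+2))) ∂μ
          ≤ ∑' k : ℕ, ENNReal.ofReal
              (τ ^ (k+2) / (Nat.factorial (k+2)) * (cConst ((k+2 : ℕ) : ℝ) * K ^ (k+2))) :=
            ENNReal.tsum_le_tsum (fun k => hterm (k+2) (by omega))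
        _ = ENNReal.ofReal (∫ t in Ioi (0:ℝ), g t) := htail
        _ = ENNReal.ofReal (2*τ*(I1 - I0)) := by rw [hgval]
    calc (∫⁻ ω, ENNReal.ofReal ((τ * Z ω) ^ 0 / (Nat.factorial 0)) ∂μ)
          + (∫⁻ ω, ENNReal.ofReal ((τ * Z ω) ^ 1 / (Nat.factorial 1)) ∂μ)
          + ∑' k : ℕ, ∫⁻ ω, ENNReal.ofReal ((τ * Z ω) ^ (k+2) / (Nat.factorial (k+2))) ∂μ
        ≤ 1 + ENNReal.ofReal (τ * K) + ENNReal.ofReal (2*τ*(I1 - I0)) := by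
          rw [hF0]
          exact add_le_add (add_le_add le_rfl hF1) hFtail
      _ = ENNReal.ofReal (1 + τ*K + 2*τ*(I1 - I0)) := by
          have hq : (0:ℝ) ≤ 2*τ*(I1 - I0) :=
            mul_nonneg (mul_nonneg (by norm_num) hτ) (sub_nonneg.mpr hI01)
          have hp : (0:ℝ) ≤ 1 + τ*K := by nlinarith [mul_nonneg hτ hK.le]
          rw [ENNReal.ofReal_add hp hq,
            ENNReal.ofReal_add (by norm_num : (0:ℝ) ≤ 1) (mul_nonneg hτ hK.le),
            ENNReal.ofReal_one]
      _ ≤ ENNReal.ofReal B := ENNReal.ofReal_le_ofReal hreal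
  -- conclude
  have hnn : 0 ≤ᵐ[μ] fun ω => Real.exp (τ * Z ω) :=
    Filter.Eventually.of_forall fun ω => (Real.exp_pos _).le
  have hmZ : AEStronglyMeasurable (fun ω => Real.exp (τ * Z ω)) μ :=
    ((hZmeas.const_mul τ).exp).aestronglyMeasurable
  refine ⟨⟨hmZ, ?_⟩, ?_⟩
  · rw [hasFiniteIntegral_iff_ofReal hnn]
    exact lt_of_le_of_lt key ENNReal.ofReal_lt_top
  · rw [integral_eq_lintegral_of_nonneg_ae hnn hmZ]
    exact ENNReal.toReal_le_of_le_ofReal hB0 key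
end
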